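/- arXiv:1104.0568 — 5 statements merged into one kernel-verified Lean document; each statement's English description precedes it below -/
import Mathlib

section
/- Let n ≥ 1, let 𝒯 be a tree sequence of order n, let k = (k_1,...,k_n) ∈ ℤ^n and let 1 ≤ i < j ≤ n. Let k' be obtained from k by replacing k_i with k_j + j − i and k_j with k_i + i − j. Then L_n(𝒯,k) = −L_n(𝒯,k'); that is, L_n(𝒯,·) is shift-antisymmetric. -/
/-- The simple graph underlying a directed edge labeling. -/
def treeRel {n : ℕ} (e : Fin (n - 1) → Fin n × Fin n) : SimpleGraph (Fin n) :=
  SimpleGraph.fromRel (fun p q => ∃ j, e j = (p, q))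

/-- An `n`-tree: a directed tree whose `n` vertices are identified with `1, …, n`
(here `Fin n`) and whose `n - 1` edges are identified with `1', …, (n-1)'`
(here `Fin (n-1)`); `edge j = (p, q)` means the edge `j'` is directed from `p` to `q`. -/
structure NTree (n : ℕ) where
  edge : Fin (n - 1) → Fin n × Fin n
  loopless : ∀ j, (edge j).1 ≠ (edge j).2
  edgeInj : ∀ j j' : Fin (n - 1),
    (edge j = edge j' ∨ edge j = ((edge j').2, (edge j').1)) → j = j'
  conn : (treeRel edge).Connected

/-- The head of the edge `j'` with respect to the standard orientation away from
the root `r`: the endpoint farther from `r`. -/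
noncomputable def stdHead {n : ℕ} (T : NTree n) (r : Fin n) (j : Fin (n - 1)) : Fin n :=
  if (treeRel T.edge).dist r (T.edge j).1 < (treeRel T.edge).dist r (T.edge j).2
    then (T.edge j).2 else (T.edge j).1

/-- The permutation `π` of the vertices: first the root, then the standard heads of the
edges `1', 2', …, (n-1)'` in this order. -/
noncomputable def permFun {n : ℕ} (T : NTree n) (r : Fin n) : Fin n → Fin n :=
  fun m => if h : m.1 = 0 then r else stdHead T r ⟨m.1 - 1, by have := m.isLt; omega⟩

/-- The sign of an `n`-tree with respect to a root `r`:
`(-1) ^ (number of reversed edges) * sgn π`. -/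
noncomputable def treeSignAt {n : ℕ} (T : NTree n) (r : Fin n) : ℤ :=
  (-1) ^ (Finset.univ.filter
      (fun j : Fin (n - 1) => stdHead T r j ≠ (T.edge j).2)).card *
    (if h : Function.Bijective (permFun T r) then
      ((Equiv.Perm.sign (Equiv.ofBijective (permFun T r) h) : ℤˣ) : ℤ) else 1)

/-- The sign of an `n`-tree (independent of the root; we use the vertex `1`). -/
noncomputable def treeSign {n : ℕ} (T : NTree n) : ℤ :=
  if h : 0 < n then treeSignAt T ⟨0, h⟩ else 1

/-- `l` is admissible for `(T, k)`: for each edge `j' = (p, q)`,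
if `k p + p < k q + q` then `k p + p ≤ l j + j < k q + q`, and otherwise
`k q + q ≤ l j + j < k p + p` (all indices are 1-based in the paper, so a vertex
`p : Fin n` carries the label `k p + (p + 1)` and an edge `j : Fin (n-1)` the label
`l j + (j + 1)`). -/
def Admissible {n : ℕ} (T : NTree n) (k : Fin n → ℤ) (l : Fin (n - 1) → ℤ) : Prop :=
  ∀ j : Fin (n - 1),
    if k (T.edge j).1 + ((T.edge j).1.1 : ℤ) + 1 < k (T.edge j).2 + ((T.edge j).2.1 : ℤ) + 1
    then k (T.edge j).1 + ((T.edge j).1.1 : ℤ) + 1 ≤ l j + (j.1 : ℤ) + 1 ∧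
         l j + (j.1 : ℤ) + 1 < k (T.edge j).2 + ((T.edge j).2.1 : ℤ) + 1
    else k (T.edge j).2 + ((T.edge j).2.1 : ℤ) + 1 ≤ l j + (j.1 : ℤ) + 1 ∧
         l j + (j.1 : ℤ) + 1 < k (T.edge j).1 + ((T.edge j).1.1 : ℤ) + 1

/-- The number of inversions of the pair `(T, k)`: edges `j' = (p, q)` with
`¬ (k p + p < k q + q)`. -/
def invCount {n : ℕ} (T : NTree n) (k : Fin n → ℤ) : ℕ :=
  (Finset.univ.filter (fun j : Fin (n - 1) =>
    ¬ (k (T.edge j).1 + ((T.edge j).1.1 : ℤ) + 1 <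
        k (T.edge j).2 + ((T.edge j).2.1 : ℤ) + 1))).card

/-- A tree sequence of order `n`: `T_1, …, T_n` where `T_i` is an `i`-tree. -/
def TreeSeq (n : ℕ) := ∀ i : Fin n, NTree (i.1 + 1)

/-- A Gelfand-Tsetlin tree sequence associated with `𝒯` and `k`: a sequence of
labelings `L i : Fin (i+1) → ℤ` with top labeling `k` and such that each `L (i-1)`
is admissible for `(T_{i+1}, L i)`. -/
def IsGTTreeSeq {n : ℕ} (𝒯 : TreeSeq n) (k : Fin n → ℤ)
    (L : ∀ i : Fin n, Fin (i.1 + 1) → ℤ) : Prop :=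
  (∀ i : Fin n, i.1 + 1 = n → ∀ j : Fin (i.1 + 1),
      L i j = k ⟨j.1, by have := j.isLt; omega⟩) ∧
  ∀ i : Fin n, ∀ hi : 0 < i.1,
    Admissible (𝒯 i) (L i)
      (fun j => L ⟨i.1 - 1, by have := i.isLt; omega⟩
        ⟨j.1, by have := j.isLt; show j.1 < i.1 - 1 + 1; omega⟩)

/-- The sign of a Gelfand-Tsetlin tree sequence:
`(-1) ^ (number of inversions) * sgn 𝒯`. -/
noncomputable def gtSign {n : ℕ} (𝒯 : TreeSeq n)
    (L : ∀ i : Fin n, Fin (i.1 + 1) → ℤ) : ℤ :=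
  (-1) ^ (∑ i : Fin n, invCount (𝒯 i) (L i)) * ∏ i : Fin n, treeSign (𝒯 i)

/-- `L_n(𝒯, k)`: the signed enumeration of all Gelfand-Tsetlin tree sequences
associated with `𝒯` and `k`. -/
noncomputable def Lsum {n : ℕ} (𝒯 : TreeSeq n) (k : Fin n → ℤ) : ℤ :=
  ∑ᶠ L ∈ {L : ∀ i : Fin n, Fin (i.1 + 1) → ℤ | IsGTTreeSeq 𝒯 k L}, gtSign 𝒯 L

namespace GTAux
open Finset Function
/-- Signed sum of `f` over the integer interval from `a` to `b`. -/
noncomputable def SSum (a b : ℤ) (f : ℤ → ℤ) : ℤ :=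
  (∑ x ∈ Finset.Ico a b, f x) - (∑ x ∈ Finset.Ico b a, f x)

lemma Ico_single (b : ℤ) : Finset.Ico b (b + 1) = {b} := by
  ext x; simp only [Finset.mem_Ico, Finset.mem_singleton]; omega

lemma ssum_swap (a b : ℤ) (f : ℤ → ℤ) : SSum b a f = -SSum a b f := by
  unfold SSum; ring

lemma ssum_eq (a b : ℤ) (f : ℤ → ℤ) :
    SSum a b f = (if a < b then 1 else -1) * ∑ x ∈ Finset.Ico (min a b) (max a b), f x := by
  rcases lt_trichotomy a b with h | h | h
  · rw [if_pos h, min_eq_left h.le, max_eq_right h.le]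
    unfold SSum
    have e : Finset.Ico b a = ∅ := Finset.Ico_eq_empty (by omega)
    rw [e]
    simp
  · subst h
    simp [SSum]
  · rw [if_neg (by omega), min_eq_right h.le, max_eq_left h.le]
    unfold SSum
    have e : Finset.Ico a b = ∅ := Finset.Ico_eq_empty (by omega)
    rw [e]
    simp

lemma ssum_const_mul (a b c : ℤ) (f : ℤ → ℤ) :
    SSum a b (fun t => c * f t) = c * SSum a b f := by
  unfold SSum
  rw [mul_sub, Finset.mul_sum, Finset.mul_sum]

lemma ssum_neg (a b : ℤ) (f : ℤ → ℤ) :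
    SSum a b (fun t => -f t) = -SSum a b f := by
  have := ssum_const_mul a b (-1) f
  simpa using this

lemma sum_Ico_succ (a b : ℤ) (h : a ≤ b) (f : ℤ → ℤ) :
    ∑ x ∈ Finset.Ico a (b + 1), f x = (∑ x ∈ Finset.Ico a b, f x) + f b := by
  rw [← Finset.Ico_union_Ico_eq_Ico h (by omega : b ≤ b + 1),
    Finset.sum_union (Finset.Ico_disjoint_Ico_consecutive a b (b + 1)), Ico_single]
  simp

lemma ssum_succ_top (a b : ℤ) (f : ℤ → ℤ) :
    SSum a (b + 1) f = SSum a b f + f b := by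
  unfold SSum
  rcases le_or_gt a b with h | h
  · rw [sum_Ico_succ a b h f]
    have e1 : Finset.Ico (b + 1) a = ∅ := Finset.Ico_eq_empty (by omega)
    have e2 : Finset.Ico b a = ∅ := Finset.Ico_eq_empty (by omega)
    rw [e1, e2]
    simp
  · have e1 : Finset.Ico a (b + 1) = ∅ := Finset.Ico_eq_empty (by omega)
    have e2 : Finset.Ico a b = ∅ := Finset.Ico_eq_empty (by omega)
    rw [e1, e2]
    have e3 : ∑ x ∈ Finset.Ico b a, f x = f b + ∑ x ∈ Finset.Ico (b + 1) a, f x := by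
      rw [← Finset.Ico_union_Ico_eq_Ico (by omega : b ≤ b + 1) (by omega : b + 1 ≤ a),
        Finset.sum_union (Finset.Ico_disjoint_Ico_consecutive b (b + 1) a), Ico_single]
      simp
    rw [e3]
    ring

lemma ssum_eq_sub (a b : ℤ) (f : ℤ → ℤ) :
    SSum a b f = SSum 0 b f - SSum 0 a f := by
  induction b using Int.induction_on with
  | zero =>
      have h0 : SSum 0 0 f = 0 := by simp [SSum]
      rw [h0, ssum_swap a 0 f]
      ring
  | succ n ih =>
      rw [ssum_succ_top, ssum_succ_top, ih]
      ring
  | pred n ih =>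
      have h1 := ssum_succ_top a (-(n:ℤ) - 1) f
      have h2 := ssum_succ_top 0 (-(n:ℤ) - 1) f
      have e : (-(n:ℤ) - 1 + 1) = -n := by ring
      rw [e] at h1 h2
      omega

lemma ssum_trans (a b c : ℤ) (f : ℤ → ℤ) :
    SSum a c f = SSum a b f + SSum b c f := by
  rw [ssum_eq_sub a c, ssum_eq_sub a b, ssum_eq_sub b c]
  ring

lemma ssum_ssum_antisym (a b : ℤ) (H : ℤ → ℤ → ℤ) (h : ∀ s t, H s t = -H t s) :
    SSum a b (fun s => SSum a b (fun t => H s t)) = 0 := by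
  have key : (∑ s ∈ Finset.Ico (min a b) (max a b),
      ∑ t ∈ Finset.Ico (min a b) (max a b), H s t) = 0 := by
    set I := Finset.Ico (min a b) (max a b)
    have h1 : (∑ s ∈ I, ∑ t ∈ I, H s t) = ∑ t ∈ I, ∑ s ∈ I, H s t := Finset.sum_comm
    have h2 : (∑ t ∈ I, ∑ s ∈ I, H s t) = -∑ t ∈ I, ∑ s ∈ I, H t s := by
      rw [← Finset.sum_neg_distrib]
      refine Finset.sum_congr rfl fun t _ => ?_
      rw [← Finset.sum_neg_distrib]
      exact Finset.sum_congr rfl fun s _ => h s t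
    omega
  have e : (fun s => SSum a b (fun t => H s t)) = fun s =>
      (if a < b then 1 else -1) * ∑ t ∈ Finset.Ico (min a b) (max a b), H s t := by
    funext s; rw [ssum_eq]
  rw [ssum_eq, e, ← Finset.mul_sum, key]
  ring


variable {m : ℕ}

/-- The box of admissible shifted edge labels. -/
noncomputable def ebox (α β : Fin m → ℤ) : Finset (Fin m → ℤ) :=
  Fintype.piFinset (fun j => Finset.Ico (min (α j) (β j)) (max (α j) (β j)))

def esign (α β : Fin m → ℤ) : ℤ := ∏ j, (if α j < β j then (1 : ℤ) else -1)

/-- The signed box-summation operator. -/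
noncomputable def MOp (α β : Fin m → ℤ) (F : (Fin m → ℤ) → ℤ) : ℤ :=
  esign α β * ∑ x ∈ ebox α β, F x

lemma MOp_neg (α β : Fin m → ℤ) (F : (Fin m → ℤ) → ℤ) :
    MOp α β (fun x => -F x) = -MOp α β F := by
  unfold MOp
  rw [Finset.sum_neg_distrib]
  ring

lemma MOp_congr (α β : Fin m → ℤ) (F G : (Fin m → ℤ) → ℤ) (h : ∀ x, F x = G x) :
    MOp α β F = MOp α β G := by
  unfold MOp
  congr 1
  exact Finset.sum_congr rfl fun x _ => h x

lemma sum_ebox_split (α β : Fin m → ℤ) (j₀ : Fin m) (G : (Fin m → ℤ) → ℤ) :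
    ∑ x ∈ ebox α β, G x
      = ∑ t ∈ Finset.Ico (min (α j₀) (β j₀)) (max (α j₀) (β j₀)),
          ∑ x ∈ ebox (update α j₀ 0) (update β j₀ 1), G (update x j₀ t) := by
  rw [← Finset.sum_product']
  refine Finset.sum_nbij' (fun x => (x j₀, update x j₀ 0)) (fun p => update p.2 j₀ p.1)
    ?_ ?_ ?_ ?_ ?_
  · intro x hx
    simp only [ebox, Fintype.mem_piFinset] at hx
    rw [Finset.mem_product]
    refine ⟨hx j₀, ?_⟩
    simp only [ebox, Fintype.mem_piFinset]
    intro j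
    by_cases h : j = j₀
    · subst h
      simp
    · rw [update_of_ne h, update_of_ne h, update_of_ne h]
      exact hx j
  · intro p hp
    rw [Finset.mem_product] at hp
    obtain ⟨h1, h2⟩ := hp
    simp only [ebox, Fintype.mem_piFinset] at h2 ⊢
    intro j
    by_cases h : j = j₀
    · subst h
      rw [update_self]
      exact h1
    · rw [update_of_ne h]
      have := h2 j
      rw [update_of_ne h, update_of_ne h] at this
      exact this
  · intro x hx
    dsimp only
    funext j
    by_cases h : j = j₀
    · subst h; rw [update_self]
    · rw [update_of_ne h, update_of_ne h]
  · intro p hp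
    rw [Finset.mem_product] at hp
    obtain ⟨h1, h2⟩ := hp
    simp only [ebox, Fintype.mem_piFinset] at h2
    have hp2 : p.2 j₀ = 0 := by
      have := h2 j₀
      simp only [update_self] at this
      rw [Finset.mem_Ico] at this
      simp at this
      omega
    have h3 : update (update p.2 j₀ p.1) j₀ 0 = p.2 := by
      rw [update_idem, ← hp2, update_eq_self]
    rw [update_self, h3]
  · intro x hx
    dsimp only
    have h3 : update (update x j₀ 0) j₀ (x j₀) = x := by
      rw [update_idem, update_eq_self]
    rw [h3]

lemma esign_extract (α β : Fin m → ℤ) (j₀ : Fin m) :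
    esign α β = (if α j₀ < β j₀ then (1 : ℤ) else -1) *
      esign (update α j₀ 0) (update β j₀ 1) := by
  unfold esign
  rw [← Finset.mul_prod_erase Finset.univ _ (Finset.mem_univ j₀),
    ← Finset.mul_prod_erase Finset.univ
      (fun j => if update α j₀ 0 j < update β j₀ 1 j then (1 : ℤ) else -1) (Finset.mem_univ j₀)]
  rw [update_self, update_self, if_pos (by omega : (0:ℤ) < 1), one_mul]
  congr 1
  refine Finset.prod_congr rfl fun j hj => ?_
  have h : j ≠ j₀ := (Finset.mem_erase.mp hj).1
  rw [update_of_ne h, update_of_ne h]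

/-- Extracting one coordinate of the signed box sum as a signed interval sum. -/
lemma MOp_extract (α β : Fin m → ℤ) (F : (Fin m → ℤ) → ℤ) (j₀ : Fin m) :
    MOp α β F = SSum (α j₀) (β j₀) (fun t =>
      MOp (update α j₀ 0) (update β j₀ 1) (fun x => F (update x j₀ t))) := by
  have e1 : (fun t => MOp (update α j₀ 0) (update β j₀ 1) (fun x => F (update x j₀ t)))
      = fun t => esign (update α j₀ 0) (update β j₀ 1) *
          ∑ x ∈ ebox (update α j₀ 0) (update β j₀ 1), F (update x j₀ t) := rfl
  rw [e1, ssum_const_mul, ssum_eq]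
  rw [MOp, esign_extract α β j₀, sum_ebox_split α β j₀ F]
  ring

/-- Chasles relation for the box operator in one coordinate. -/
lemma MOp_chasles (α β : Fin m → ℤ) (F : (Fin m → ℤ) → ℤ) (j₀ : Fin m) (c : ℤ) :
    MOp α β F = MOp α (update β j₀ c) F + MOp (update α j₀ c) β F := by
  rw [MOp_extract α β F j₀, MOp_extract α (update β j₀ c) F j₀,
    MOp_extract (update α j₀ c) β F j₀]
  rw [update_self, update_idem, update_self, update_idem]
  exact ssum_trans (α j₀) c (β j₀) _


lemma MOp_flip (α β : Fin m → ℤ) (F : (Fin m → ℤ) → ℤ) (j₀ : Fin m) :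
    MOp (update α j₀ (β j₀)) (update β j₀ (α j₀)) F = -MOp α β F := by
  rw [MOp_extract (update α j₀ (β j₀)) (update β j₀ (α j₀)) F j₀, MOp_extract α β F j₀]
  rw [update_self, update_self, update_idem, update_idem]
  exact ssum_swap (α j₀) (β j₀) _

/-- `F` changes sign when two coordinates are exchanged. -/
def AntiSym (F : (Fin m → ℤ) → ℤ) : Prop :=
  ∀ j₁ j₂ : Fin m, j₁ ≠ j₂ →
    ∀ x, F (update (update x j₁ (x j₂)) j₂ (x j₁)) = -F x

lemma antiSym_point {F : (Fin m → ℤ) → ℤ} (hF : AntiSym F) {j₁ j₂ : Fin m}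
    (hne : j₁ ≠ j₂) (s t : ℤ) (x : Fin m → ℤ) :
    F (update (update x j₂ t) j₁ s) = -F (update (update x j₂ s) j₁ t) := by
  set y := update (update x j₂ s) j₁ t with hy
  have hy2 : y j₂ = s := by rw [hy, update_of_ne (Ne.symm hne), update_self]
  have hy1 : y j₁ = t := by rw [hy, update_self]
  have key := hF j₁ j₂ hne y
  rw [hy2, hy1] at key
  have e : update (update y j₁ s) j₂ t = update (update x j₂ t) j₁ s := by
    rw [hy, update_idem, update_comm hne, update_idem]
  rw [e] at key
  exact key

lemma MOp_vanish (F : (Fin m → ℤ) → ℤ) (hF : AntiSym F) (j₁ j₂ : Fin m)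
    (hne : j₁ ≠ j₂) (α β : Fin m → ℤ) (h1 : α j₁ = α j₂) (h2 : β j₁ = β j₂) :
    MOp α β F = 0 := by
  rw [MOp_extract α β F j₁]
  have e : (fun s => MOp (update α j₁ 0) (update β j₁ 1) (fun x => F (update x j₁ s)))
      = fun s => SSum (α j₁) (β j₁) (fun t =>
          MOp (update (update α j₁ 0) j₂ 0) (update (update β j₁ 1) j₂ 1)
            (fun x => F (update (update x j₂ t) j₁ s))) := by
    funext s
    rw [MOp_extract _ _ _ j₂, update_of_ne (Ne.symm hne), update_of_ne (Ne.symm hne),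
      ← h1, ← h2]
  rw [e]
  refine ssum_ssum_antisym (α j₁) (β j₁) _ fun s t => ?_
  have : (fun x => F (update (update x j₂ t) j₁ s))
      = fun x => -F (update (update x j₂ s) j₁ t) := by
    funext x
    exact antiSym_point hF hne s t x
  rw [this, MOp_neg]


lemma MOp_zero_term (F : (Fin m → ℤ) → ℤ) (hF : AntiSym F) (j e₀ : Fin m) (hje : j ≠ e₀)
    (u v : ℤ) (γ δ : Fin m → ℤ) (hγ0 : γ e₀ = u) (hδ0 : δ e₀ = v)
    (hj : (γ j = u ∧ δ j = v) ∨ (γ j = v ∧ δ j = u)) :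
    MOp γ δ F = 0 := by
  rcases hj with ⟨h1, h2⟩ | ⟨h1, h2⟩
  · exact MOp_vanish F hF j e₀ hje γ δ (by rw [h1, hγ0]) (by rw [h2, hδ0])
  · have hf := MOp_flip γ δ F j
    have hv : MOp (update γ j (δ j)) (update δ j (γ j)) F = 0 := by
      refine MOp_vanish F hF j e₀ hje _ _ ?_ ?_
      · rw [update_self, update_of_ne (Ne.symm hje), h2, hγ0]
      · rw [update_self, update_of_ne (Ne.symm hje), h1, hδ0]
    omega

lemma MOp_corr (F : (Fin m → ℤ) → ℤ) (hF : AntiSym F) (e₀ : Fin m) (A B : Fin m → ℤ)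
    (N : ℕ) :
    ∀ α β : Fin m → ℤ, α e₀ = A e₀ → β e₀ = B e₀ →
    (∀ j, α j = A j ∨ ((α j = A e₀ ∨ α j = B e₀) ∧ (A j = A e₀ ∨ A j = B e₀))) →
    (∀ j, β j = B j ∨ ((β j = A e₀ ∨ β j = B e₀) ∧ (B j = A e₀ ∨ B j = B e₀))) →
    (Finset.univ.filter fun j => α j ≠ A j).card
      + (Finset.univ.filter fun j => β j ≠ B j).card = N →
    MOp α β F = MOp A B F := by
  induction N using Nat.strong_induction_on with
  | _ N ih =>
    intro α β hα0 hβ0 hαj hβj hN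
    by_cases hzero : N = 0
    · subst hzero
      have h1 : (Finset.univ.filter fun j => α j ≠ A j) = ∅ := by
        rw [← Finset.card_eq_zero]; omega
      have h2 : (Finset.univ.filter fun j => β j ≠ B j) = ∅ := by
        rw [← Finset.card_eq_zero]; omega
      have hA : α = A := by
        funext j
        by_contra hc
        have : j ∈ (Finset.univ.filter fun j => α j ≠ A j) := by
          simp [hc]
        rw [h1] at this
        exact absurd this (Finset.notMem_empty j)
      have hB : β = B := by
        funext j
        by_contra hc
        have : j ∈ (Finset.univ.filter fun j => β j ≠ B j) := by
          simp [hc]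
        rw [h2] at this
        exact absurd this (Finset.notMem_empty j)
      rw [hA, hB]
    · have hex : ∃ j, α j ≠ A j ∨ β j ≠ B j := by
        by_contra hc
        push_neg at hc
        have h1 : (Finset.univ.filter fun j => α j ≠ A j) = ∅ :=
          Finset.filter_eq_empty_iff.mpr (fun j _ => by simpa using (hc j).1)
        have h2 : (Finset.univ.filter fun j => β j ≠ B j) = ∅ :=
          Finset.filter_eq_empty_iff.mpr (fun j _ => by simpa using (hc j).2)
        rw [h1, h2] at hN
        simp at hN
        omega
      obtain ⟨j, hj⟩ := hex
      rcases hj with hd | hd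
      · -- α-side correction
        have hje : j ≠ e₀ := fun h => hd (h ▸ hα0)
        have hmem := (hαj j).resolve_left hd
        have hpair : (α j = A e₀ ∧ A j = B e₀) ∨ (α j = B e₀ ∧ A j = A e₀) := by
          rcases hmem with ⟨h1 | h1, h2 | h2⟩ <;> first
            | (exact absurd (h1.trans h2.symm) hd) | (tauto)
        have hch := MOp_chasles α β F j (A j)
        have hz : MOp α (update β j (A j)) F = 0 := by
          refine MOp_zero_term F hF j e₀ hje (A e₀) (B e₀) _ _ hα0
            (by rw [update_of_ne (Ne.symm hje)]; exact hβ0) ?_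
          rw [update_self]
          tauto
        have hkeep : MOp α β F = MOp (update α j (A j)) β F := by omega
        rw [hkeep]
        have hcard : (Finset.univ.filter fun j' => update α j (A j) j' ≠ A j')
            = (Finset.univ.filter fun j' => α j' ≠ A j').erase j := by
          ext j'
          simp only [Finset.mem_filter, Finset.mem_erase, Finset.mem_univ, true_and]
          by_cases h : j' = j
          · subst h
            simp
          · rw [update_of_ne h]
            tauto
        have hmemfil : j ∈ (Finset.univ.filter fun j' => α j' ≠ A j') := by simp [hd]
        have hlt : (Finset.univ.filter fun j' => update α j (A j) j' ≠ A j').card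
            + (Finset.univ.filter fun j' => β j' ≠ B j').card < N := by
          rw [hcard, Finset.card_erase_of_mem hmemfil]
          have := Finset.card_pos.mpr ⟨j, hmemfil⟩
          omega
        refine ih _ hlt _ _ (by rw [update_of_ne (Ne.symm hje)]; exact hα0) hβ0 ?_ hβj rfl
        intro j'
        by_cases h : j' = j
        · subst h
          left; rw [update_self]
        · rw [update_of_ne h]; exact hαj j'
      · -- β-side correction
        have hje : j ≠ e₀ := fun h => hd (h ▸ hβ0)
        have hmem := (hβj j).resolve_left hd
        have hpair : (B j = A e₀ ∧ β j = B e₀) ∨ (B j = B e₀ ∧ β j = A e₀) := by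
          rcases hmem with ⟨h1 | h1, h2 | h2⟩ <;> first
            | (exact absurd (h1.trans h2.symm) hd) | (tauto)
        have hch := MOp_chasles α β F j (B j)
        have hz : MOp (update α j (B j)) β F = 0 := by
          refine MOp_zero_term F hF j e₀ hje (A e₀) (B e₀) _ _
            (by rw [update_of_ne (Ne.symm hje)]; exact hα0) hβ0 ?_
          rw [update_self]
          tauto
        have hkeep : MOp α β F = MOp α (update β j (B j)) F := by omega
        rw [hkeep]
        have hcard : (Finset.univ.filter fun j' => update β j (B j) j' ≠ B j')
            = (Finset.univ.filter fun j' => β j' ≠ B j').erase j := by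
          ext j'
          simp only [Finset.mem_filter, Finset.mem_erase, Finset.mem_univ, true_and]
          by_cases h : j' = j
          · subst h
            simp
          · rw [update_of_ne h]
            tauto
        have hmemfil : j ∈ (Finset.univ.filter fun j' => β j' ≠ B j') := by simp [hd]
        have hlt : (Finset.univ.filter fun j' => α j' ≠ A j').card
            + (Finset.univ.filter fun j' => update β j (B j) j' ≠ B j').card < N := by
          rw [hcard, Finset.card_erase_of_mem hmemfil]
          have := Finset.card_pos.mpr ⟨j, hmemfil⟩
          omega
        refine ih _ hlt _ _ hα0 (by rw [update_of_ne (Ne.symm hje)]; exact hβ0) hαj ?_ rfl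
        intro j'
        by_cases h : j' = j
        · subst h
          left; rw [update_self]
        · rw [update_of_ne h]; exact hβj j'


variable {n : ℕ}

def endA (T : NTree n) (a : Fin n → ℤ) : Fin (n - 1) → ℤ := fun j => a (T.edge j).1
def endB (T : NTree n) (a : Fin n → ℤ) : Fin (n - 1) → ℤ := fun j => a (T.edge j).2

lemma MOp_swap_of_edge (T : NTree n) (F : (Fin (n - 1) → ℤ) → ℤ) (hF : AntiSym F)
    (a : Fin n → ℤ) (p q : Fin n) (hpq : p ≠ q) (e₀ : Fin (n - 1))
    (he : T.edge e₀ = (p, q)) :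
    MOp (endA T (fun t => a (Equiv.swap p q t))) (endB T (fun t => a (Equiv.swap p q t))) F
      = -MOp (endA T a) (endB T a) F := by
  set a' : Fin n → ℤ := fun t => a (Equiv.swap p q t) with ha'
  have hAe : endA T a e₀ = a p := by rw [endA, he]
  have hBe : endB T a e₀ = a q := by rw [endB, he]
  set Abar := update (endA T a) e₀ (a q) with hAbar
  set Bbar := update (endB T a) e₀ (a p) with hBbar
  have hflip : MOp Abar Bbar F = -MOp (endA T a) (endB T a) F := by
    rw [hAbar, hBbar, ← hAe, ← hBe]
    exact MOp_flip (endA T a) (endB T a) F e₀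
  have hA0 : Abar e₀ = a q := by rw [hAbar, update_self]
  have hB0 : Bbar e₀ = a p := by rw [hBbar, update_self]
  have hswap : ∀ w : Fin n, a' w = a w ∨ ((a' w = a q ∨ a' w = a p) ∧ (a w = a q ∨ a w = a p)) := by
    intro w
    rw [ha']
    simp only [Equiv.swap_apply_def]
    split_ifs with h1 h2
    · subst h1; right; exact ⟨Or.inl rfl, Or.inr rfl⟩
    · subst h2; right; exact ⟨Or.inr rfl, Or.inl rfl⟩
    · left; rfl
  have hcorr : MOp (endA T a') (endB T a') F = MOp Abar Bbar F := by
    refine MOp_corr F hF e₀ Abar Bbar _ (endA T a') (endB T a') ?_ ?_ ?_ ?_ rfl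
    · rw [hA0, endA, he]
      simp [ha', Equiv.swap_apply_left]
    · rw [hB0, endB, he]
      simp [ha', Equiv.swap_apply_right]
    · intro j
      rw [hA0, hB0]
      by_cases hj : j = e₀
      · subst hj
        left
        rw [hAbar, update_self, endA, he]
        simp [ha', Equiv.swap_apply_left]
      · rw [hAbar, update_of_ne hj]
        have := hswap ((T.edge j).1)
        rw [endA]
        tauto
    · intro j
      rw [hA0, hB0]
      by_cases hj : j = e₀
      · subst hj
        left
        rw [hBbar, update_self, endB, he]
        simp [ha', Equiv.swap_apply_right]
      · rw [hBbar, update_of_ne hj]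
        have := hswap ((T.edge j).2)
        rw [endB]
        tauto
  rw [hcorr, hflip]

lemma MOp_swap_of_adj (T : NTree n) (F : (Fin (n - 1) → ℤ) → ℤ) (hF : AntiSym F)
    (a : Fin n → ℤ) (p q : Fin n) (hadj : (treeRel T.edge).Adj p q) :
    MOp (endA T (fun t => a (Equiv.swap p q t))) (endB T (fun t => a (Equiv.swap p q t))) F
      = -MOp (endA T a) (endB T a) F := by
  rw [treeRel, SimpleGraph.fromRel_adj] at hadj
  obtain ⟨hne, h | h⟩ := hadj
  · obtain ⟨e₀, he⟩ := h
    exact MOp_swap_of_edge T F hF a p q hne e₀ he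
  · obtain ⟨e₀, he⟩ := h
    have := MOp_swap_of_edge T F hF a q p (Ne.symm hne) e₀ he
    rw [Equiv.swap_comm q p] at this
    exact this

lemma MOp_swap_dist (T : NTree n) (F : (Fin (n - 1) → ℤ) → ℤ) (hF : AntiSym F) (d : ℕ) :
    ∀ (a : Fin n → ℤ) (p q : Fin n), p ≠ q → (treeRel T.edge).dist p q = d →
    MOp (endA T (fun t => a (Equiv.swap p q t))) (endB T (fun t => a (Equiv.swap p q t))) F
      = -MOp (endA T a) (endB T a) F := by
  induction d using Nat.strong_induction_on with
  | _ d ih =>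
    intro a p q hpq hd
    have hdpos : 0 < d := hd ▸ T.conn.pos_dist_of_ne hpq
    obtain ⟨w, hw⟩ := T.conn.exists_walk_length_eq_dist p q
    rw [hd] at hw
    cases w with
    | nil => exact absurd rfl hpq
    | @cons _ v _ hadjpv w' =>
      rw [SimpleGraph.Walk.length_cons] at hw
      by_cases hd1 : d = 1
      · have hvq : v = q := SimpleGraph.Walk.eq_of_length_eq_zero (p := w') (by omega)
        subst hvq
        exact MOp_swap_of_adj T F hF a p v hadjpv
      · have hdvq_le : (treeRel T.edge).dist v q ≤ d - 1 := by
          have := SimpleGraph.dist_le w'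
          omega
        have hdpv : (treeRel T.edge).dist p v ≤ 1 :=
          SimpleGraph.dist_le (SimpleGraph.Walk.cons hadjpv SimpleGraph.Walk.nil)
        have htri := T.conn.dist_triangle (u := p) (v := v) (w := q)
        have hdvq : (treeRel T.edge).dist v q = d - 1 := by omega
        have hvq : v ≠ q := by
          intro h
          subst h
          rw [SimpleGraph.dist_self] at hdvq
          omega
        have hpv : p ≠ v := hadjpv.ne
        have hperm : Equiv.swap v p * Equiv.swap q v * Equiv.swap v p = Equiv.swap p q :=
          Equiv.swap_mul_swap_mul_swap hvq.symm (Ne.symm hpq)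
        have hcomp : ∀ t, Equiv.swap p q t
            = Equiv.swap p v (Equiv.swap v q (Equiv.swap p v t)) := by
          intro t
          rw [← hperm]
          simp only [Equiv.Perm.mul_apply]
          rw [Equiv.swap_comm v p, Equiv.swap_comm q v]
        have key : (fun t => a (Equiv.swap p q t))
            = fun t => a (Equiv.swap p v (Equiv.swap v q (Equiv.swap p v t))) := by
          funext t
          exact congrArg a (hcomp t)
        rw [key]
        have h1 : MOp (endA T (fun t => a (Equiv.swap p v (Equiv.swap v q (Equiv.swap p v t)))))
              (endB T (fun t => a (Equiv.swap p v (Equiv.swap v q (Equiv.swap p v t))))) F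
            = -MOp (endA T (fun t => a (Equiv.swap p v (Equiv.swap v q t))))
              (endB T (fun t => a (Equiv.swap p v (Equiv.swap v q t)))) F :=
          MOp_swap_of_adj T F hF (fun t => a (Equiv.swap p v (Equiv.swap v q t))) p v hadjpv
        have h2 : MOp (endA T (fun t => a (Equiv.swap p v (Equiv.swap v q t))))
              (endB T (fun t => a (Equiv.swap p v (Equiv.swap v q t)))) F
            = -MOp (endA T (fun t => a (Equiv.swap p v t)))
              (endB T (fun t => a (Equiv.swap p v t))) F :=
          ih (d - 1) (by omega) (fun t => a (Equiv.swap p v t)) v q hvq hdvq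
        have h3 : MOp (endA T (fun t => a (Equiv.swap p v t)))
              (endB T (fun t => a (Equiv.swap p v t))) F
            = -MOp (endA T a) (endB T a) F :=
          MOp_swap_of_adj T F hF a p v hadjpv
        rw [h1, h2, h3]
        ring

lemma MOp_swap (T : NTree n) (F : (Fin (n - 1) → ℤ) → ℤ) (hF : AntiSym F)
    (a : Fin n → ℤ) (p q : Fin n) (hpq : p ≠ q) :
    MOp (endA T (fun t => a (Equiv.swap p q t))) (endB T (fun t => a (Equiv.swap p q t))) F
      = -MOp (endA T a) (endB T a) F :=
  MOp_swap_dist T F hF ((treeRel T.edge).dist p q) a p q hpq rfl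


/-! ### Gelfand-Tsetlin sequence decomposition -/

def aOf {N : ℕ} (k : Fin N → ℤ) : Fin N → ℤ := fun t => k t + (t.1 : ℤ) + 1

variable {m : ℕ}

def topT (𝒯 : TreeSeq (m + 2)) : NTree (m + 2) := 𝒯 ⟨m + 1, by omega⟩

def lowSeq (𝒯 : TreeSeq (m + 2)) : TreeSeq (m + 1) := fun i => 𝒯 ⟨i.1, by omega⟩

def lift (k : Fin (m + 2) → ℤ) (L' : ∀ i : Fin (m + 1), Fin (i.1 + 1) → ℤ) :
    ∀ i : Fin (m + 2), Fin (i.1 + 1) → ℤ :=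
  fun i => if h : i.1 < m + 1 then L' ⟨i.1, h⟩
    else fun j => k ⟨j.1, by have := i.isLt; have := j.isLt; omega⟩

def drop (L : ∀ i : Fin (m + 2), Fin (i.1 + 1) → ℤ) : ∀ i : Fin (m + 1), Fin (i.1 + 1) → ℤ :=
  fun i => L ⟨i.1, by have := i.isLt; omega⟩

def rowx (L : ∀ i : Fin (m + 2), Fin (i.1 + 1) → ℤ) : Fin (m + 1) → ℤ :=
  fun j => L ⟨m, by omega⟩ j + (j.1 : ℤ) + 1

def lx (x : Fin (m + 1) → ℤ) : Fin (m + 1) → ℤ := fun j => x j - (j.1 : ℤ) - 1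

lemma adm_iff (T : NTree (m + 2)) (k : Fin (m + 2) → ℤ) (x : Fin (m + 1) → ℤ) :
    Admissible T k (lx x) ↔ x ∈ ebox (endA T (aOf k)) (endB T (aOf k)) := by
  rw [ebox, Fintype.mem_piFinset]
  unfold Admissible endA endB aOf lx
  apply forall_congr'
  intro j
  rw [Finset.mem_Ico]
  by_cases h : k (T.edge j).1 + ((T.edge j).1.1 : ℤ) + 1 <
      k (T.edge j).2 + ((T.edge j).2.1 : ℤ) + 1
  · rw [if_pos h, min_eq_left (le_of_lt h), max_eq_right (le_of_lt h)]
    constructor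
    · rintro ⟨h1, h2⟩; omega
    · rintro ⟨h1, h2⟩; omega
  · rw [if_neg h, min_eq_right (by omega), max_eq_left (by omega)]
    constructor
    · rintro ⟨h1, h2⟩; omega
    · rintro ⟨h1, h2⟩; omega

lemma lift_castSucc (k : Fin (m + 2) → ℤ) (L' : ∀ i : Fin (m + 1), Fin (i.1 + 1) → ℤ)
    (i : Fin (m + 1)) : lift k L' i.castSucc = L' i := dif_pos i.isLt

lemma drop_lift (k : Fin (m + 2) → ℤ) (L' : ∀ i : Fin (m + 1), Fin (i.1 + 1) → ℤ) :
    drop (lift k L') = L' := funext fun i => dif_pos i.isLt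

lemma lift_mem (𝒯 : TreeSeq (m + 2)) (k : Fin (m + 2) → ℤ) (x : Fin (m + 1) → ℤ)
    (hx : Admissible (topT 𝒯) k (lx x)) (L' : ∀ i : Fin (m + 1), Fin (i.1 + 1) → ℤ)
    (hL' : IsGTTreeSeq (lowSeq 𝒯) (lx x) L') :
    IsGTTreeSeq 𝒯 k (lift k L') := by
  constructor
  · intro i hi jj
    have hni : ¬ (i.1 < m + 1) := by omega
    have e1 : lift k L' i = fun j => k ⟨j.1, by have := i.isLt; have := j.isLt; omega⟩ :=
      dif_neg hni
    rw [e1]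
  · intro i hi0
    by_cases h : i.1 < m + 1
    · have e1 : lift k L' i = L' ⟨i.1, h⟩ := dif_pos h
      have e2 : lift k L' (⟨i.1 - 1, by have := i.isLt; omega⟩ : Fin (m + 2))
          = L' ⟨i.1 - 1, by omega⟩ := dif_pos (by simp; omega)
      rw [e1, e2]
      exact hL'.2 ⟨i.1, h⟩ hi0
    · have hi' : i = ⟨m + 1, Nat.lt_succ_self (m + 1)⟩ := Fin.ext (by have := i.isLt; simp; omega)
      subst hi'
      have e1 : lift k L' (⟨m + 1, Nat.lt_succ_self (m + 1)⟩ : Fin (m + 2)) = k := dif_neg (by simp)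
      have e2 : lift k L' (⟨(⟨m + 1, Nat.lt_succ_self (m + 1)⟩ : Fin (m + 2)).1 - 1, by omega⟩ : Fin (m + 2))
          = L' ⟨m, Nat.lt_succ_self m⟩ := dif_pos (by simp)
      rw [e1, e2]
      have e3 : (fun jj : Fin (m + 2 - 1) => L' (⟨m, Nat.lt_succ_self m⟩ : Fin (m + 1)) ⟨jj.1, jj.isLt⟩)
          = lx x := by
        funext jj
        exact hL'.1 ⟨m, Nat.lt_succ_self m⟩ rfl ⟨jj.1, jj.isLt⟩
      show Admissible _ k (fun jj : Fin (m + 2 - 1) => L' ⟨m, Nat.lt_succ_self m⟩ ⟨jj.1, jj.isLt⟩)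
      rw [e3]
      exact hx

lemma mem_of_isGT (𝒯 : TreeSeq (m + 2)) (k : Fin (m + 2) → ℤ)
    (L : ∀ i : Fin (m + 2), Fin (i.1 + 1) → ℤ) (hL : IsGTTreeSeq 𝒯 k L) :
    Admissible (topT 𝒯) k (lx (rowx L)) ∧ IsGTTreeSeq (lowSeq 𝒯) (lx (rowx L)) (drop L)
      ∧ lift k (drop L) = L := by
  have hlx : lx (rowx L) = L ⟨m, by omega⟩ := by
    funext j; unfold lx rowx; ring
  have htop : L ⟨m + 1, by omega⟩ = k := by
    funext j
    exact hL.1 ⟨m + 1, by omega⟩ rfl j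
  refine ⟨?_, ⟨?_, ?_⟩, ?_⟩
  · have h2 := hL.2 ⟨m + 1, by omega⟩ (Nat.succ_pos m)
    rw [htop] at h2
    rw [hlx]
    exact h2
  · intro i hi jj
    have hi' : i = ⟨m, Nat.lt_succ_self m⟩ := Fin.ext (by simpa using hi)
    subst hi'
    rw [hlx]
    rfl
  · intro i hi0
    exact hL.2 ⟨i.1, by have := i.isLt; omega⟩ hi0
  · funext i
    by_cases h : i.1 < m + 1
    · exact dif_pos h
    · have hi' : i = ⟨m + 1, Nat.lt_succ_self (m + 1)⟩ := Fin.ext (by have := i.isLt; simp; omega)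
      subst hi'
      have e1 : lift k (drop L) (⟨m + 1, Nat.lt_succ_self (m + 1)⟩ : Fin (m + 2)) = k :=
        dif_neg (by simp)
      rw [e1, htop]

lemma gtFinite : ∀ (n : ℕ) (𝒯 : TreeSeq n) (k : Fin n → ℤ),
    {L : ∀ i : Fin n, Fin (i.1 + 1) → ℤ | IsGTTreeSeq 𝒯 k L}.Finite := by
  intro n
  induction n with
  | zero =>
      intro 𝒯 k
      exact Set.subsingleton_of_subsingleton.finite
  | succ m ih =>
      cases m with
      | zero =>
          intro 𝒯 k
          refine Set.Finite.subset (Set.finite_singleton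
            (fun (i : Fin 1) (j : Fin (i.1 + 1)) =>
              k ⟨j.1, by have := i.isLt; have := j.isLt; omega⟩)) ?_
          intro L hL
          simp only [Set.mem_singleton_iff]
          funext i j
          exact hL.1 i (by have := i.isLt; omega) j
      | succ m' =>
          intro 𝒯 k
          refine Set.Finite.subset (Set.Finite.biUnion
            (ebox (endA (topT 𝒯) (aOf k)) (endB (topT 𝒯) (aOf k))).finite_toSet
            (fun x _ => (ih (lowSeq 𝒯) (lx x)).image (lift k))) ?_
          intro L hL
          obtain ⟨h1, h2, h3⟩ := mem_of_isGT 𝒯 k L hL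
          rw [Set.mem_iUnion₂]
          exact ⟨rowx L, (adm_iff _ _ _).mp h1, ⟨drop L, h2, h3⟩⟩


lemma esign_eq (T : NTree (m + 2)) (k : Fin (m + 2) → ℤ) :
    esign (endA T (aOf k)) (endB T (aOf k)) = (-1 : ℤ) ^ invCount T k := by
  unfold esign invCount
  rw [Finset.prod_ite, Finset.prod_const_one, one_mul, Finset.prod_const]
  rfl

lemma gtSign_lift (𝒯 : TreeSeq (m + 2)) (k : Fin (m + 2) → ℤ)
    (L' : ∀ i : Fin (m + 1), Fin (i.1 + 1) → ℤ) :
    gtSign 𝒯 (lift k L')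
      = (-1 : ℤ) ^ invCount (topT 𝒯) k * treeSign (topT 𝒯) * gtSign (lowSeq 𝒯) L' := by
  unfold gtSign
  rw [Fin.sum_univ_castSucc, Fin.prod_univ_castSucc]
  have e1 : ∀ i : Fin (m + 1),
      invCount (𝒯 i.castSucc) (lift k L' i.castSucc) = invCount (lowSeq 𝒯 i) (L' i) := by
    intro i
    rw [lift_castSucc k L' i]
    rfl
  have e2 : (∑ i : Fin (m + 1), invCount (𝒯 i.castSucc) (lift k L' i.castSucc))
      = ∑ i : Fin (m + 1), invCount (lowSeq 𝒯 i) (L' i) :=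
    Finset.sum_congr rfl fun i _ => e1 i
  have e3 : lift k L' (Fin.last (m + 1)) = k := dif_neg (by simp)
  have e4 : invCount (𝒯 (Fin.last (m + 1))) (lift k L' (Fin.last (m + 1)))
      = invCount (topT 𝒯) k := by rw [e3]; rfl
  have e5 : (∏ i : Fin (m + 1), treeSign (𝒯 i.castSucc))
      = ∏ i : Fin (m + 1), treeSign (lowSeq 𝒯 i) :=
    Finset.prod_congr rfl fun i _ => rfl
  have e6 : treeSign (𝒯 (Fin.last (m + 1))) = treeSign (topT 𝒯) := rfl
  rw [e2, e4, e5, e6, pow_add]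
  ring

lemma transfer (𝒯 : TreeSeq (m + 2)) (k : Fin (m + 2) → ℤ) :
    Lsum 𝒯 k = treeSign (topT 𝒯) *
      MOp (endA (topT 𝒯) (aOf k)) (endB (topT 𝒯) (aOf k))
        (fun x => Lsum (lowSeq 𝒯) (lx x)) := by
  classical
  have hS := gtFinite (m + 2) 𝒯 k
  have hS' : ∀ x : Fin (m + 1) → ℤ,
      {L' : ∀ i : Fin (m + 1), Fin (i.1 + 1) → ℤ | IsGTTreeSeq (lowSeq 𝒯) (lx x) L'}.Finite :=
    fun x => gtFinite (m + 1) _ _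
  rw [Lsum, finsum_mem_eq_finite_toFinset_sum _ hS]
  have main : ∑ L ∈ hS.toFinset, gtSign 𝒯 L
      = ∑ p ∈ (ebox (endA (topT 𝒯) (aOf k)) (endB (topT 𝒯) (aOf k))).sigma
          (fun x => (hS' x).toFinset), gtSign 𝒯 (lift k p.2) := by
    refine Finset.sum_nbij' (fun L => ⟨rowx L, drop L⟩) (fun p => lift k p.2) ?_ ?_ ?_ ?_ ?_
    · intro L hL
      rw [Set.Finite.mem_toFinset] at hL
      rw [Finset.mem_sigma]
      obtain ⟨h1, h2, h3⟩ := mem_of_isGT 𝒯 k L hL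
      exact ⟨(adm_iff _ _ _).mp h1, (hS' _).mem_toFinset.mpr h2⟩
    · intro p hp
      rw [Finset.mem_sigma] at hp
      rw [Set.Finite.mem_toFinset]
      exact lift_mem 𝒯 k p.1 ((adm_iff _ _ _).mpr hp.1) p.2 ((hS' _).mem_toFinset.mp hp.2)
    · intro L hL
      rw [Set.Finite.mem_toFinset] at hL
      exact (mem_of_isGT 𝒯 k L hL).2.2
    · intro p hp
      rw [Finset.mem_sigma] at hp
      have h2 := (hS' _).mem_toFinset.mp hp.2
      obtain ⟨x, L'⟩ := p
      have hx : rowx (lift k L') = x := by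
        funext j
        have e1 : lift k L' (⟨m, by omega⟩ : Fin (m + 2)) = L' ⟨m, Nat.lt_succ_self m⟩ :=
          dif_pos (by simp)
        unfold rowx
        rw [e1]
        have e2 : L' ⟨m, Nat.lt_succ_self m⟩ j = lx x ⟨j.1, j.isLt⟩ :=
          h2.1 ⟨m, Nat.lt_succ_self m⟩ rfl j
        rw [e2]
        show lx x ⟨j.1, _⟩ + (j.1 : ℤ) + 1 = x j
        unfold lx
        have : (⟨j.1, j.isLt⟩ : Fin (m + 1)) = j := rfl
        rw [this]
        ring
      dsimp only
      rw [hx, drop_lift]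
    · intro L hL
      rw [Set.Finite.mem_toFinset] at hL
      exact congrArg _ ((mem_of_isGT 𝒯 k L hL).2.2).symm
  rw [main, Finset.sum_sigma]
  have inner : ∀ x ∈ ebox (endA (topT 𝒯) (aOf k)) (endB (topT 𝒯) (aOf k)),
      (∑ L' ∈ (hS' x).toFinset, gtSign 𝒯 (lift k L'))
        = (-1 : ℤ) ^ invCount (topT 𝒯) k * treeSign (topT 𝒯) * Lsum (lowSeq 𝒯) (lx x) := by
    intro x _
    rw [Lsum, finsum_mem_eq_finite_toFinset_sum _ (hS' x), Finset.mul_sum]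
    exact Finset.sum_congr rfl fun L' _ => gtSign_lift 𝒯 k L'
  rw [Finset.sum_congr rfl inner, ← Finset.mul_sum]
  unfold MOp
  rw [esign_eq (topT 𝒯) k]
  ring


lemma antisym_aux : ∀ (n : ℕ) (𝒯 : TreeSeq n) (k : Fin n → ℤ) (i j : Fin n), i < j →
    Lsum 𝒯 k = - Lsum 𝒯 (fun t =>
      if t = i then k j + ((j.1 : ℤ) - (i.1 : ℤ))
      else if t = j then k i + ((i.1 : ℤ) - (j.1 : ℤ))
      else k t) := by
  intro n
  induction n with
  | zero => intro _ _ i; exact i.elim0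
  | succ m ih =>
    cases m with
    | zero =>
        intro 𝒯 k i j hij
        rw [Fin.lt_def] at hij
        have hi := i.isLt
        have hj := j.isLt
        omega
    | succ m' =>
        intro 𝒯 k i j hij
        have hij' : i ≠ j := Fin.ne_of_lt hij
        have hF : AntiSym (fun x : Fin (m' + 1) → ℤ => Lsum (lowSeq 𝒯) (lx x)) := by
          intro j₁ j₂ hne x
          dsimp only
          rcases lt_or_gt_of_ne hne with h | h
          · have hih := ih (lowSeq 𝒯) (lx x) j₁ j₂ h
            have e : lx (update (update x j₁ (x j₂)) j₂ (x j₁)) = fun t =>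
                if t = j₁ then lx x j₂ + ((j₂.1 : ℤ) - (j₁.1 : ℤ))
                else if t = j₂ then lx x j₁ + ((j₁.1 : ℤ) - (j₂.1 : ℤ))
                else lx x t := by
              funext t
              unfold lx
              by_cases h1 : t = j₁
              · subst h1
                rw [if_pos rfl, update_of_ne hne, update_self]
                ring
              · by_cases h2 : t = j₂
                · subst h2
                  rw [if_neg h1, if_pos rfl, update_self]
                  ring
                · rw [if_neg h1, if_neg h2, update_of_ne h2, update_of_ne h1]
            rw [e]
            linarith [hih]
          · have hih := ih (lowSeq 𝒯) (lx x) j₂ j₁ h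
            have e : lx (update (update x j₁ (x j₂)) j₂ (x j₁)) = fun t =>
                if t = j₂ then lx x j₁ + ((j₁.1 : ℤ) - (j₂.1 : ℤ))
                else if t = j₁ then lx x j₂ + ((j₂.1 : ℤ) - (j₁.1 : ℤ))
                else lx x t := by
              funext t
              unfold lx
              by_cases h1 : t = j₂
              · subst h1
                rw [if_pos rfl, update_self]
                ring
              · by_cases h2 : t = j₁
                · subst h2
                  rw [if_neg h1, if_pos rfl, update_of_ne hne, update_self]
                  ring
                · rw [if_neg h1, if_neg h2, update_of_ne h1, update_of_ne h2]
            rw [e]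
            linarith [hih]
        have hk' : aOf (fun t =>
            if t = i then k j + ((j.1 : ℤ) - (i.1 : ℤ))
            else if t = j then k i + ((i.1 : ℤ) - (j.1 : ℤ))
            else k t) = fun t => aOf k (Equiv.swap i j t) := by
          funext t
          unfold aOf
          simp only [Equiv.swap_apply_def]
          by_cases h1 : t = i
          · rw [if_pos h1, if_pos h1]
            subst h1
            ring
          · rw [if_neg h1, if_neg h1]
            by_cases h2 : t = j
            · rw [if_pos h2, if_pos h2]
              subst h2
              ring
            · rw [if_neg h2, if_neg h2]
        have h1 := transfer 𝒯 k
        have h2 := transfer 𝒯 (fun t =>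
            if t = i then k j + ((j.1 : ℤ) - (i.1 : ℤ))
            else if t = j then k i + ((i.1 : ℤ) - (j.1 : ℤ))
            else k t)
        rw [hk'] at h2
        have h3 := MOp_swap (topT 𝒯) (fun x => Lsum (lowSeq 𝒯) (lx x)) hF (aOf k) i j hij'
        rw [h3] at h2
        rw [h1, h2]
        ring

end GTAux


/-- Shift-antisymmetry: replacing `(k_i, k_j)` by `(k_j + j - i, k_i + i - j)` reverses
the sign of the signed enumeration of Gelfand-Tsetlin tree sequences. -/
theorem gt_tree_sequence_shift_antisymmetry (n : ℕ) (hn : 1 ≤ n)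
    (𝒯 : TreeSeq n) (k : Fin n → ℤ) (i j : Fin n) (hij : i < j) :
    Lsum 𝒯 k =
      - Lsum 𝒯 (fun t =>
          if t = i then k j + ((j.1 : ℤ) - (i.1 : ℤ))
          else if t = j then k i + ((i.1 : ℤ) - (j.1 : ℤ))
          else k t) :=
  GTAux.antisym_aux n 𝒯 k i j hij
end

section
/- Let n ≥ 1 and ρ ≥ 1, and let P : ℤ^n → ℚ be the function P(k) = ∏_{1 ≤ i < j ≤ n} (k_j − k_i + j − i). Then e_ρ(Δ_1,...,Δ_n) P = 0, where Δ_i is the forward difference operator in the i-th coordinate and e_ρ is the ρ-th elementary symmetric polynomial in n variables. -/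
/-- `kup k i t` shifts the `i`-th coordinate of `k` by `t`. -/
def kup {n : ℕ} (k : Fin n → ℤ) (i : Fin n) (t : ℤ) : Fin n → ℤ :=
  fun j => if j = i then k j + t else k j

/-- The forward difference operator `Δ_i = E_i - id` on functions `ℤ^n → ℚ`. -/
def DeltaOp (n : ℕ) (i : Fin n) : ((Fin n → ℤ) → ℚ) → ((Fin n → ℤ) → ℚ) :=
  fun A k => A (kup k i 1) - A k

/-- The backward difference operator `δ_i = id - E_i⁻¹` on functions `ℤ^n → ℚ`. -/
def deltaOp (n : ℕ) (i : Fin n) : ((Fin n → ℤ) → ℚ) → ((Fin n → ℤ) → ℚ) :=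
  fun A k => A k - A (kup k i (-1))

/-- The product (composition) of the commuting operators `F i`, `i ∈ S`. -/
noncomputable def opProd (n : ℕ) (F : Fin n → ((Fin n → ℤ) → ℚ) → ((Fin n → ℤ) → ℚ))
    (S : Finset (Fin n)) : ((Fin n → ℤ) → ℚ) → ((Fin n → ℤ) → ℚ) :=
  S.toList.foldr (fun i f => F i ∘ f) id

/-- The `ρ`-th elementary symmetric polynomial `e_ρ(F 1, …, F n)` of the commuting
operators `F i`, applied to a function `ℤ^n → ℚ`. -/
noncomputable def esymmOp (n ρ : ℕ) (F : Fin n → ((Fin n → ℤ) → ℚ) → ((Fin n → ℤ) → ℚ)) :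
    ((Fin n → ℤ) → ℚ) → ((Fin n → ℤ) → ℚ) :=
  fun A k => ∑ S ∈ Finset.powersetCard ρ (Finset.univ : Finset (Fin n)), opProd n F S A k

namespace EsymmDeltaAux

open Finset Polynomial

variable {n : ℕ}

/-- Shift by `1` the coordinates in `T`, rational version. -/
def pw (T : Finset (Fin n)) (x : Fin n → ℚ) : Fin n → ℚ :=
  fun i => if i ∈ T then x i + 1 else x i

/-- The Vandermonde product. -/
def Vd {n : ℕ} (x : Fin n → ℚ) : ℚ := ∏ q : Fin n, ∏ p ∈ Finset.Iio q, (x q - x p)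

lemma Vd_eq_det (x : Fin n → ℚ) : Vd x = (Matrix.vandermonde x).det := by
  rw [Matrix.det_vandermonde, Vd]
  exact (Finset.prod_comm' (by simp [and_comm])).symm

lemma binom_row (x s : ℚ) (j : Fin n) :
    ∑ k : Fin n, x ^ (k : ℕ) * ((if (k : ℕ) = (j : ℕ) then 1 else 0) + s * ((j : ℕ).choose (k : ℕ) : ℚ))
      = x ^ (j : ℕ) + s * (x + 1) ^ (j : ℕ) := by
  have h1 : ∑ k : Fin n, x ^ (k : ℕ) * (if (k : ℕ) = (j : ℕ) then (1:ℚ) else 0)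
      = x ^ (j : ℕ) := by
    rw [Finset.sum_eq_single j]
    · simp
    · intro b _ hb
      rw [if_neg (by simpa [Fin.val_eq_val] using hb), mul_zero]
    · simp
  have h2 : ∑ k : Fin n, ((j : ℕ).choose (k : ℕ) : ℚ) * x ^ (k : ℕ) = (x + 1) ^ (j : ℕ) := by
    rw [Fin.sum_univ_eq_sum_range (fun m => ((j:ℕ).choose m : ℚ) * x ^ m) n]
    rw [add_pow]
    simp only [one_pow, mul_one]
    rw [← Finset.sum_subset (Finset.range_subset_range.mpr j.isLt)]
    · exact Finset.sum_congr rfl (fun m _ => by ring)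
    · intro m _ hm
      rw [Nat.choose_eq_zero_of_lt (by simpa using hm), Nat.cast_zero, zero_mul]
  calc ∑ k : Fin n, x ^ (k : ℕ) * ((if (k : ℕ) = (j : ℕ) then 1 else 0) + s * ((j : ℕ).choose (k : ℕ) : ℚ))
      = (∑ k : Fin n, x ^ (k : ℕ) * (if (k : ℕ) = (j : ℕ) then (1:ℚ) else 0))
        + s * ∑ k : Fin n, ((j : ℕ).choose (k : ℕ) : ℚ) * x ^ (k : ℕ) := by
        rw [Finset.mul_sum, ← Finset.sum_add_distrib]
        exact Finset.sum_congr rfl (fun k _ => by ring)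
    _ = x ^ (j : ℕ) + s * (x + 1) ^ (j : ℕ) := by rw [h1, h2]

lemma det_shift (x : Fin n → ℚ) (s : ℚ) :
    (Matrix.of fun i j : Fin n => x i ^ (j : ℕ) + s * (x i + 1) ^ (j : ℕ)).det
      = (1 + s) ^ n * ((Matrix.vandermonde x).det) := by
  have hC : (Matrix.of fun k j : Fin n =>
      (if (k : ℕ) = (j : ℕ) then (1:ℚ) else 0) + s * ((j : ℕ).choose (k : ℕ) : ℚ)).det
      = (1 + s) ^ n := by
    rw [Matrix.det_of_upperTriangular]
    · simp
    · intro i j hij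
      have hij' : (j : ℕ) < (i : ℕ) := hij
      simp only [Matrix.of_apply]
      rw [if_neg (by omega), Nat.choose_eq_zero_of_lt hij', Nat.cast_zero,
        mul_zero, add_zero]
  have hM : (Matrix.of fun i j : Fin n => x i ^ (j : ℕ) + s * (x i + 1) ^ (j : ℕ))
      = Matrix.vandermonde x * (Matrix.of fun k j : Fin n =>
        (if (k : ℕ) = (j : ℕ) then (1:ℚ) else 0) + s * ((j : ℕ).choose (k : ℕ) : ℚ)) := by
    ext i j
    rw [Matrix.mul_apply]
    simp only [Matrix.of_apply, Matrix.vandermonde_apply]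
    exact (binom_row (x i) s j).symm
  rw [hM, Matrix.det_mul, hC, mul_comm]

lemma det_shift_expand (x : Fin n → ℚ) (s : ℚ) :
    (Matrix.of fun i j : Fin n => x i ^ (j : ℕ) + s * (x i + 1) ^ (j : ℕ)).det
      = ∑ T : Finset (Fin n), s ^ T.card * (Matrix.vandermonde (pw T x)).det := by
  classical
  set u : Fin n → (Fin n → ℚ) := fun i j => x i ^ (j : ℕ) with hu
  set w : Fin n → (Fin n → ℚ) := fun i j => (x i + 1) ^ (j : ℕ) with hw
  have key : (Matrix.of fun i j : Fin n => x i ^ (j : ℕ) + s * (x i + 1) ^ (j : ℕ)).det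
      = Matrix.detRowAlternating ((fun i => s • w i) + u) := by
    congr 1
    funext i j
    simp [u, w]
    ring
  rw [key]
  have hcoe : Matrix.detRowAlternating ((fun i => s • w i) + u)
      = (Matrix.detRowAlternating (R := ℚ) (n := Fin n)).toMultilinearMap
          ((fun i => s • w i) + u) := rfl
  rw [hcoe, (Matrix.detRowAlternating (R := ℚ) (n := Fin n)).toMultilinearMap.map_add_univ
    (fun i => s • w i) u]
  refine Finset.sum_congr rfl (fun T _ => ?_)
  have hpiece : (T.piecewise (fun i => s • w i) u)
      = T.piecewise (fun i => s • (T.piecewise w u) i) (T.piecewise w u) := by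
    funext i
    by_cases h : i ∈ T <;>
      simp [Finset.piecewise_eq_of_mem _ _ _ , Finset.piecewise, h]
  calc Matrix.detRowAlternating.toMultilinearMap (T.piecewise (fun i => s • w i) u)
      = Matrix.detRowAlternating.toMultilinearMap
          (T.piecewise (fun i => (fun _ => s) i • (T.piecewise w u) i) (T.piecewise w u)) := by
        rw [← hpiece]
    _ = (∏ _i ∈ T, s) • Matrix.detRowAlternating.toMultilinearMap (T.piecewise w u) :=
        MultilinearMap.map_piecewise_smul _ _ _ _
    _ = s ^ T.card * (Matrix.vandermonde (pw T x)).det := by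
        rw [Finset.prod_const, smul_eq_mul]
        congr 1
        have hrow : T.piecewise w u = Matrix.of (fun i j : Fin n => (pw T x i) ^ (j : ℕ)) := by
          funext i j
          by_cases h : i ∈ T <;> simp [Finset.piecewise, h, pw, u, w]
        show Matrix.detRowAlternating (T.piecewise w u) = _
        rw [hrow]
        rfl

lemma sum_expand (x : Fin n → ℚ) (s : ℚ) :
    ∑ T : Finset (Fin n), s ^ T.card * Vd (pw T x) = (1 + s) ^ n * Vd x := by
  have h := (det_shift_expand x s).symm.trans (det_shift x s)
  rw [Vd_eq_det x]
  rw [← h]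
  exact Finset.sum_congr rfl (fun T _ => by rw [Vd_eq_det])

lemma sum_powersetCard_Vd (x : Fin n → ℚ) (t : ℕ) :
    ∑ T ∈ powersetCard t (univ : Finset (Fin n)), Vd (pw T x)
      = (n.choose t : ℚ) * Vd x := by
  classical
  have hpoly : (∑ T : Finset (Fin n), (C (Vd (pw T x)) * X ^ T.card) : ℚ[X])
      = C (Vd x) * (1 + X) ^ n := by
    apply Polynomial.funext
    intro s
    rw [eval_mul, eval_pow, eval_add, eval_one, eval_X, eval_C, eval_finset_sum]
    simp only [eval_mul, eval_pow, eval_C, eval_X]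
    rw [show ∑ T : Finset (Fin n), Vd (pw T x) * s ^ T.card
        = ∑ T : Finset (Fin n), s ^ T.card * Vd (pw T x) from
      Finset.sum_congr rfl (fun T _ => mul_comm _ _), sum_expand, mul_comm]
  have hc := congrArg (fun p => Polynomial.coeff p t) hpoly
  simp only [finset_sum_coeff, coeff_C_mul, coeff_X_pow, coeff_one_add_X_pow, mul_ite,
    mul_one, mul_zero] at hc
  rw [show powersetCard t (univ : Finset (Fin n)) = univ.filter (fun T => T.card = t) from by
    ext T; simp [Finset.mem_powersetCard_univ], Finset.sum_filter]
  rw [show (∑ T : Finset (Fin n), if T.card = t then Vd (pw T x) else 0)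
      = ∑ T : Finset (Fin n), if t = T.card then Vd (pw T x) else 0 from
    Finset.sum_congr rfl (fun T _ => by by_cases h : T.card = t <;> simp [h, Ne.symm, eq_comm]),
    hc, mul_comm]

/-- Integer version of `pw`. -/
def shft (k : Fin n → ℤ) (T : Finset (Fin n)) : Fin n → ℤ :=
  fun j => if j ∈ T then k j + 1 else k j

lemma shft_empty (k : Fin n → ℤ) : shft k ∅ = k := by
  funext j; simp [shft]

lemma shft_kup (k : Fin n → ℤ) (i : Fin n) (T : Finset (Fin n)) (hi : i ∉ T) :
    shft (kup k i 1) T = shft k (insert i T) := by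
  funext j
  by_cases hj : j = i
  · subst hj
    simp [shft, kup, hi]
  · by_cases hjT : j ∈ T <;> simp [shft, kup, hj, hjT]

instance deltaLC : LeftCommutative
    (fun (i : Fin n) (f : ((Fin n → ℤ) → ℚ) → ((Fin n → ℤ) → ℚ)) => DeltaOp n i ∘ f) := by
  constructor
  intro a b f
  funext A k
  have hk : ∀ i j (k : Fin n → ℤ), kup (kup k i 1) j 1 = kup (kup k j 1) i 1 := by
    intro i j k
    funext m
    by_cases h1 : m = i <;> by_cases h2 : m = j <;> simp [kup, h1, h2] <;> split <;> simp
  simp only [Function.comp_apply, DeltaOp, hk a b]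
  ring

lemma opProd_insert (a : Fin n) (S : Finset (Fin n)) (ha : a ∉ S) :
    opProd n (DeltaOp n) (insert a S) = DeltaOp n a ∘ opProd n (DeltaOp n) S := by
  unfold opProd
  rw [List.Perm.foldr_eq (Finset.toList_insert ha)]
  rfl

lemma opProd_delta (A : (Fin n → ℤ) → ℚ) (S : Finset (Fin n)) :
    ∀ k, opProd n (DeltaOp n) S A k
      = ∑ T ∈ S.powerset, (-1 : ℚ) ^ (S.card - T.card) * A (shft k T) := by
  classical
  induction S using Finset.induction with
  | empty =>
    intro k
    simp [opProd, shft_empty]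
  | @insert a S ha ih =>
    intro k
    rw [opProd_insert a S ha]
    have hM : (DeltaOp n a ∘ opProd n (DeltaOp n) S) A k
        = opProd n (DeltaOp n) S A (kup k a 1) - opProd n (DeltaOp n) S A k := rfl
    rw [hM, ih, ih]
    have hdisj : Disjoint S.powerset (S.powerset.image (insert a)) := by
      rw [Finset.disjoint_left]
      intro T hT hT2
      obtain ⟨T', _, rfl⟩ := Finset.mem_image.mp hT2
      exact ha (Finset.mem_powerset.mp hT (Finset.mem_insert_self a _))
    rw [Finset.powerset_insert, Finset.sum_union hdisj]
    have hcard : (insert a S).card = S.card + 1 := Finset.card_insert_of_notMem ha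
    have hinj : ∀ T ∈ S.powerset, ∀ T' ∈ S.powerset, insert a T = insert a T' → T = T' := by
      intro T hT T' hT' h
      have haT : a ∉ T := fun h' => ha (Finset.mem_powerset.mp hT h')
      have haT' : a ∉ T' := fun h' => ha (Finset.mem_powerset.mp hT' h')
      rw [← Finset.erase_insert haT, ← Finset.erase_insert haT', h]
    rw [Finset.sum_image hinj]
    have h1 : ∀ T ∈ S.powerset, (-1 : ℚ) ^ ((insert a S).card - (insert a T).card)
        * A (shft k (insert a T))
        = (-1 : ℚ) ^ (S.card - T.card) * A (shft (kup k a 1) T) := by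
      intro T hT
      have haT : a ∉ T := fun h' => ha (Finset.mem_powerset.mp hT h')
      rw [hcard, Finset.card_insert_of_notMem haT, Nat.succ_sub_succ, shft_kup k a T haT]
    have h2 : ∀ T ∈ S.powerset, (-1 : ℚ) ^ ((insert a S).card - T.card) * A (shft k T)
        = -((-1 : ℚ) ^ (S.card - T.card) * A (shft k T)) := by
      intro T hT
      have hle : T.card ≤ S.card := Finset.card_le_card (Finset.mem_powerset.mp hT)
      rw [hcard, Nat.succ_sub hle, pow_succ]
      ring
    rw [Finset.sum_congr rfl h1, Finset.sum_congr rfl h2, Finset.sum_neg_distrib]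
    ring

lemma card_filter_superset (T : Finset (Fin n)) (ρ : ℕ) :
    ((powersetCard ρ (univ : Finset (Fin n))).filter fun S => T ⊆ S).card
      = if T.card ≤ ρ then (n - T.card).choose (ρ - T.card) else 0 := by
  classical
  by_cases h : T.card ≤ ρ
  · rw [if_pos h]
    rw [show (n - T.card).choose (ρ - T.card)
        = (powersetCard (ρ - T.card) Tᶜ).card from by
      rw [Finset.card_powersetCard, Finset.card_compl, Fintype.card_fin]]
    apply Finset.card_nbij' (i := fun S => S \ T) (j := fun U => U ∪ T)
    · intro S hS
      simp only [Finset.mem_coe, Finset.mem_filter, Finset.mem_powersetCard_univ] at hS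
      rw [Finset.mem_coe, Finset.mem_powersetCard]
      refine ⟨fun a haST => ?_, ?_⟩
      · simp only [Finset.mem_compl]
        exact (Finset.mem_sdiff.mp haST).2
      · rw [Finset.card_sdiff_of_subset hS.2, hS.1]
    · intro U hU
      rw [Finset.mem_coe, Finset.mem_powersetCard] at hU
      have hdisj : Disjoint U T := by
        rw [Finset.disjoint_left]
        intro a haU haT
        exact (Finset.mem_compl.mp (hU.1 haU)) haT
      simp only [Finset.mem_coe, Finset.mem_filter, Finset.mem_powersetCard_univ]
      constructor
      · rw [Finset.card_union_of_disjoint hdisj, hU.2]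
        omega
      · exact Finset.subset_union_right
    · intro S hS
      simp only [Finset.mem_coe, Finset.mem_filter, Finset.mem_powersetCard_univ] at hS
      exact Finset.sdiff_union_of_subset hS.2
    · intro U hU
      simp only [Finset.mem_coe, Finset.mem_powersetCard] at hU
      have hdisj : Disjoint U T := by
        rw [Finset.disjoint_left]
        intro a haU haT
        exact (Finset.mem_compl.mp (hU.1 haU)) haT
      exact Finset.union_sdiff_cancel_right hdisj
  · rw [if_neg h, Finset.card_eq_zero, Finset.filter_eq_empty_iff]
    intro S hS
    rw [Finset.mem_powersetCard_univ] at hS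
    intro hTS
    exact h (hS ▸ Finset.card_le_card hTS)

lemma binom_sum (ρ : ℕ) (h1 : 1 ≤ ρ) (h2 : ρ ≤ n) :
    ∑ t ∈ Finset.range (n + 1),
      (if t ≤ ρ then (((n - t).choose (ρ - t) : ℚ)) else 0) * (-1 : ℚ) ^ (ρ - t) * (n.choose t : ℚ)
      = 0 := by
  rw [← Finset.sum_subset (Finset.range_subset_range.mpr (by omega : ρ + 1 ≤ n + 1))]
  · have hterm : ∀ t ∈ Finset.range (ρ + 1),
        (if t ≤ ρ then (((n - t).choose (ρ - t) : ℚ)) else 0) * (-1 : ℚ) ^ (ρ - t) * (n.choose t : ℚ)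
        = (n.choose ρ : ℚ) * ((-1 : ℚ) ^ (ρ - t) * (ρ.choose t : ℚ)) := by
      intro t ht
      rw [Finset.mem_range] at ht
      have htρ : t ≤ ρ := by omega
      rw [if_pos htρ]
      have hnat : n.choose ρ * ρ.choose t = n.choose t * (n - t).choose (ρ - t) :=
        Nat.choose_mul (n := n) htρ
      have hq : ((n.choose ρ : ℚ)) * (ρ.choose t : ℚ)
          = (n.choose t : ℚ) * ((n - t).choose (ρ - t) : ℚ) := by
        exact_mod_cast hnat
      rw [show ((n - t).choose (ρ - t) : ℚ) * (-1 : ℚ) ^ (ρ - t) * (n.choose t : ℚ)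
          = (-1 : ℚ) ^ (ρ - t) * ((n.choose t : ℚ) * ((n - t).choose (ρ - t) : ℚ)) from by ring,
        ← hq]
      ring
    rw [Finset.sum_congr rfl hterm, ← Finset.mul_sum]
    have hz : ∑ t ∈ Finset.range (ρ + 1), (-1 : ℚ) ^ (ρ - t) * (ρ.choose t : ℚ) = 0 := by
      rw [← Finset.sum_range_reflect]
      have : ∀ j ∈ Finset.range (ρ + 1),
          (-1 : ℚ) ^ (ρ - (ρ + 1 - 1 - j)) * (ρ.choose (ρ + 1 - 1 - j) : ℚ)
          = (-1 : ℚ) ^ j * (ρ.choose j : ℚ) := by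
        intro j hj
        rw [Finset.mem_range] at hj
        have hjρ : j ≤ ρ := by omega
        rw [show ρ + 1 - 1 - j = ρ - j from by omega, Nat.sub_sub_self hjρ,
          Nat.choose_symm hjρ]
      rw [Finset.sum_congr rfl this]
      exact_mod_cast Int.alternating_sum_range_choose_of_ne (by omega : ρ ≠ 0)
    rw [hz, mul_zero]
  · intro t _ ht2
    rw [Finset.mem_range, not_lt] at ht2
    rw [if_neg (by omega), zero_mul, zero_mul]

end EsymmDeltaAux

open EsymmDeltaAux Finset in
/-- For `ρ ≥ 1`, the operator `e_ρ(Δ_1, …, Δ_n)` annihilates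
`P(k) = ∏_{1 ≤ i < j ≤ n} (k_j - k_i + j - i)`. -/
theorem esymm_delta_annihilates_product (n : ℕ) (hn : 1 ≤ n) (ρ : ℕ) (hρ : 1 ≤ ρ) :
    esymmOp n ρ (DeltaOp n)
      (fun k => ∏ q : Fin n, ∏ p ∈ Finset.Iio q,
        ((k q : ℚ) - (k p : ℚ) + (q.1 : ℚ) - (p.1 : ℚ))) = 0 := by
  classical
  set P : (Fin n → ℤ) → ℚ := fun k => ∏ q : Fin n, ∏ p ∈ Finset.Iio q,
    ((k q : ℚ) - (k p : ℚ) + (q.1 : ℚ) - (p.1 : ℚ)) with hPdef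
  funext k
  show esymmOp n ρ (DeltaOp n) P k = 0
  by_cases hρn : ρ ≤ n
  swap
  · have hempty : Finset.powersetCard ρ (Finset.univ : Finset (Fin n)) = ∅ := by
      rw [Finset.powersetCard_eq_empty]
      simp only [Finset.card_univ, Fintype.card_fin]
      omega
    show (∑ S ∈ Finset.powersetCard ρ (Finset.univ : Finset (Fin n)),
      opProd n (DeltaOp n) S P k) = 0
    rw [hempty, Finset.sum_empty]
  set x : Fin n → ℚ := fun i => (k i : ℚ) + (i : ℕ) with hxdef
  have hPV : ∀ T : Finset (Fin n), P (shft k T) = Vd (pw T x) := by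
    intro T
    rw [hPdef, Vd]
    refine Finset.prod_congr rfl (fun q _ => Finset.prod_congr rfl (fun p _ => ?_))
    by_cases hq : q ∈ T <;> by_cases hp : p ∈ T <;>
      simp only [shft, pw, hq, hp, if_true, if_false, hxdef] <;> push_cast <;> ring
  show (∑ S ∈ Finset.powersetCard ρ (Finset.univ : Finset (Fin n)),
    opProd n (DeltaOp n) S P k) = 0
  have step1 : (∑ S ∈ Finset.powersetCard ρ (Finset.univ : Finset (Fin n)),
      opProd n (DeltaOp n) S P k)
      = ∑ S ∈ Finset.powersetCard ρ (Finset.univ : Finset (Fin n)),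
          ∑ T : Finset (Fin n),
            (if T ⊆ S then (-1 : ℚ) ^ (ρ - T.card) * P (shft k T) else 0) := by
    refine Finset.sum_congr rfl (fun S hS => ?_)
    have hScard : S.card = ρ := Finset.mem_powersetCard_univ.mp hS
    rw [opProd_delta P S k, show S.powerset = univ.filter (fun T => T ⊆ S) from by
      ext T; simp, Finset.sum_filter, hScard]
  rw [step1, Finset.sum_comm]
  have step2 : ∀ T : Finset (Fin n),
      (∑ S ∈ Finset.powersetCard ρ (Finset.univ : Finset (Fin n)),
        if T ⊆ S then (-1 : ℚ) ^ (ρ - T.card) * P (shft k T) else 0)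
      = (if T.card ≤ ρ then (((n - T.card).choose (ρ - T.card) : ℚ)) else 0)
          * ((-1 : ℚ) ^ (ρ - T.card) * P (shft k T)) := by
    intro T
    rw [← Finset.sum_filter, Finset.sum_const, nsmul_eq_mul, card_filter_superset]
    push_cast
    rfl
  rw [Finset.sum_congr rfl (fun T _ => step2 T)]
  rw [show (Finset.univ : Finset (Finset (Fin n))) = (Finset.univ : Finset (Fin n)).powerset from
    (Finset.powerset_univ).symm, Finset.sum_powerset]
  simp only [Finset.card_univ, Fintype.card_fin]
  have step3 : ∀ t ∈ Finset.range (n + 1),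
      (∑ T ∈ Finset.powersetCard t (Finset.univ : Finset (Fin n)),
        (if T.card ≤ ρ then (((n - T.card).choose (ρ - T.card) : ℚ)) else 0)
          * ((-1 : ℚ) ^ (ρ - T.card) * P (shft k T)))
      = ((if t ≤ ρ then (((n - t).choose (ρ - t) : ℚ)) else 0)
          * (-1 : ℚ) ^ (ρ - t) * (n.choose t : ℚ)) * Vd x := by
    intro t _
    have hcongr : ∀ T ∈ Finset.powersetCard t (Finset.univ : Finset (Fin n)),
        (if T.card ≤ ρ then (((n - T.card).choose (ρ - T.card) : ℚ)) else 0)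
          * ((-1 : ℚ) ^ (ρ - T.card) * P (shft k T))
        = ((if t ≤ ρ then (((n - t).choose (ρ - t) : ℚ)) else 0) * (-1 : ℚ) ^ (ρ - t))
            * Vd (pw T x) := by
      intro T hT
      have hTcard : T.card = t := Finset.mem_powersetCard_univ.mp hT
      rw [hTcard, hPV T]
      ring
    rw [Finset.sum_congr rfl hcongr, ← Finset.mul_sum, sum_powersetCard_Vd]
    ring
  rw [Finset.sum_congr rfl step3, ← Finset.sum_mul, binom_sum ρ hρ hρn, zero_mul]
end

section
/- Let n ≥ 1 and let A : ℤ^n → ℚ satisfy e_ρ(Δ_1,...,Δ_n) A = 0 for all ρ with 1 ≤ ρ ≤ n. Then for every symmetric polynomial p ∈ ℚ[X_1,...,X_n] (i.e., p invariant under all permutations of the variables), one has p(E_1,...,E_n) A = p(1,1,...,1) · A. -/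
/-- `applyShifts p A` is the operator `p(E_1, …, E_n)` applied to `A`, where `E_i` is the
shift operator in the `i`-th coordinate: the monomial `X^m` acts as the shift by `m`. -/
noncomputable def applyShifts {n : ℕ} (p : MvPolynomial (Fin n) ℚ)
    (A : (Fin n → ℤ) → ℚ) : (Fin n → ℤ) → ℚ :=
  fun k => ∑ m ∈ p.support, p.coeff m * A (fun j => k j + (m j : ℤ))

open Finset MvPolynomial

section Aux

variable {n : ℕ}

lemma applyShifts_eq_sum_of_subset (p : MvPolynomial (Fin n) ℚ) (A : (Fin n → ℤ) → ℚ)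
    (s : Finset (Fin n →₀ ℕ)) (hs : p.support ⊆ s) (k : Fin n → ℤ) :
    applyShifts p A k = ∑ m ∈ s, p.coeff m * A (fun j => k j + (m j : ℤ)) := by
  refine Finset.sum_subset hs fun m _ hm => ?_
  rw [MvPolynomial.notMem_support_iff.mp hm, zero_mul]

lemma applyShifts_add (p q : MvPolynomial (Fin n) ℚ) (A : (Fin n → ℤ) → ℚ) :
    applyShifts (p + q) A = applyShifts p A + applyShifts q A := by
  funext k
  have h1 := applyShifts_eq_sum_of_subset (p + q) A (p.support ∪ q.support)
    (MvPolynomial.support_add) k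
  have h2 := applyShifts_eq_sum_of_subset p A (p.support ∪ q.support)
    Finset.subset_union_left k
  have h3 := applyShifts_eq_sum_of_subset q A (p.support ∪ q.support)
    Finset.subset_union_right k
  simp only [Pi.add_apply, h1, h2, h3, MvPolynomial.coeff_add, add_mul,
    Finset.sum_add_distrib]

lemma applyShifts_zero (A : (Fin n → ℤ) → ℚ) : applyShifts (0 : MvPolynomial (Fin n) ℚ) A = 0 := by
  funext k
  simp [applyShifts]

lemma applyShifts_monomial (m : Fin n →₀ ℕ) (a : ℚ) (A : (Fin n → ℤ) → ℚ) :
    applyShifts (MvPolynomial.monomial m a) A = fun k => a * A (fun j => k j + (m j : ℤ)) := by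
  classical
  funext k
  rcases eq_or_ne a 0 with rfl | ha
  · simp [applyShifts]
  · rw [applyShifts, MvPolynomial.support_monomial, if_neg ha, Finset.sum_singleton,
      MvPolynomial.coeff_monomial, if_pos rfl]

lemma applyShifts_monomial_mul (m : Fin n →₀ ℕ) (a : ℚ) (q : MvPolynomial (Fin n) ℚ)
    (A : (Fin n → ℤ) → ℚ) :
    applyShifts (MvPolynomial.monomial m a * q) A
      = fun k => a * applyShifts q A (fun j => k j + (m j : ℤ)) := by
  induction q using MvPolynomial.induction_on' with
  | monomial u b =>
    rw [MvPolynomial.monomial_mul, applyShifts_monomial, applyShifts_monomial]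
    funext k
    have harg : (fun j => k j + (((m + u) j : ℕ) : ℤ))
        = fun j => (k j + (m j : ℤ)) + (u j : ℤ) := by
      funext j
      simp only [Finsupp.add_apply]
      push_cast
      ring
    rw [harg]
    ring
  | add p q hp hq =>
    rw [mul_add, applyShifts_add, hp, hq, applyShifts_add]
    funext k
    simp only [Pi.add_apply]
    ring

lemma applyShifts_mul (p q : MvPolynomial (Fin n) ℚ) (A : (Fin n → ℤ) → ℚ) :
    applyShifts (p * q) A = applyShifts p (applyShifts q A) := by
  induction p using MvPolynomial.induction_on' with
  | monomial u b => rw [applyShifts_monomial_mul, applyShifts_monomial]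
  | add p p' hp hp' => rw [add_mul, applyShifts_add, hp, hp', applyShifts_add]

lemma applyShifts_C (a : ℚ) (A : (Fin n → ℤ) → ℚ) :
    applyShifts (MvPolynomial.C a : MvPolynomial (Fin n) ℚ) A = fun k => a * A k := by
  rw [← MvPolynomial.monomial_zero', applyShifts_monomial]
  simp

lemma applyShifts_const_mul (c : ℚ) (p : MvPolynomial (Fin n) ℚ) (A : (Fin n → ℤ) → ℚ) :
    applyShifts p (fun k => c * A k) = fun k => c * applyShifts p A k := by
  funext k
  simp only [applyShifts, Finset.mul_sum]
  exact Finset.sum_congr rfl fun m _ => by ring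

lemma applyShifts_finset_sum {ι : Type*} (s : Finset ι) (f : ι → MvPolynomial (Fin n) ℚ)
    (A : (Fin n → ℤ) → ℚ) :
    applyShifts (∑ i ∈ s, f i) A = fun k => ∑ i ∈ s, applyShifts (f i) A k := by
  classical
  induction s using Finset.induction_on with
  | empty => simp only [Finset.sum_empty]; exact applyShifts_zero A
  | @insert i s hi ih =>
    rw [Finset.sum_insert hi, applyShifts_add, ih]
    funext k
    simp [Finset.sum_insert hi]

lemma sum_single_apply (S : Finset (Fin n)) (j : Fin n) :
    ((∑ i ∈ S, Finsupp.single i (1 : ℕ)) j) = if j ∈ S then 1 else 0 := by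
  classical
  rw [Finset.sum_apply']
  simp [Finsupp.single_apply, eq_comm]

lemma applyShifts_esymm (ρ : ℕ) (A : (Fin n → ℤ) → ℚ) (k : Fin n → ℤ) :
    applyShifts (MvPolynomial.esymm (Fin n) ℚ ρ) A k
      = ∑ S ∈ Finset.powersetCard ρ (Finset.univ : Finset (Fin n)),
          A (fun j => k j + if j ∈ S then 1 else 0) := by
  rw [MvPolynomial.esymm_eq_sum_monomial, applyShifts_finset_sum]
  refine Finset.sum_congr rfl fun S _ => ?_
  rw [applyShifts_monomial]
  simp only [one_mul]
  congr 1
  funext j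
  rw [sum_single_apply]
  split <;> simp

/- Operator side. -/

lemma kup_comm (k : Fin n → ℤ) (i j : Fin n) (t s : ℤ) :
    kup (kup k i t) j s = kup (kup k j s) i t := by
  funext l
  simp only [kup]
  split_ifs <;> ring

lemma DeltaOp_comm (i j : Fin n) (A : (Fin n → ℤ) → ℚ) :
    DeltaOp n i (DeltaOp n j A) = DeltaOp n j (DeltaOp n i A) := by
  funext k
  simp only [DeltaOp]
  rw [kup_comm]
  ring

lemma opProd_empty (F : Fin n → ((Fin n → ℤ) → ℚ) → ((Fin n → ℤ) → ℚ)) :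
    opProd n F ∅ = id := by
  simp [opProd]

lemma opProd_insert {i : Fin n} {S : Finset (Fin n)} (hi : i ∉ S) :
    opProd n (DeltaOp n) (insert i S) = DeltaOp n i ∘ opProd n (DeltaOp n) S := by
  haveI : LeftCommutative (fun (a : Fin n) (f : ((Fin n → ℤ) → ℚ) → ((Fin n → ℤ) → ℚ)) =>
      DeltaOp n a ∘ f) :=
    ⟨fun a b f => by
      funext B
      show DeltaOp n a (DeltaOp n b (f B)) = DeltaOp n b (DeltaOp n a (f B))
      exact DeltaOp_comm a b (f B)⟩
  unfold opProd
  rw [(Finset.toList_insert hi).foldr_eq]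
  rfl

lemma indicator_expand (A : (Fin n → ℤ) → ℚ) (S : Finset (Fin n)) :
    ∀ k, A (fun j => k j + if j ∈ S then 1 else 0)
      = ∑ T ∈ S.powerset, opProd n (DeltaOp n) T A k := by
  classical
  induction S using Finset.induction_on with
  | empty =>
    intro k
    have : (fun j => k j + if j ∈ (∅ : Finset (Fin n)) then (1:ℤ) else 0) = k := by
      funext j; simp
    rw [this]
    simp [opProd_empty]
  | @insert i S hi ih =>
    intro k
    have hfun : (fun j => k j + if j ∈ insert i S then (1:ℤ) else 0)
        = (fun j => kup k i 1 j + if j ∈ S then 1 else 0) := by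
      funext j
      by_cases hj : j = i
      · subst hj
        simp [kup, hi]
      · simp [kup, hj, Finset.mem_insert]
    rw [hfun, ih (kup k i 1)]
    have hdisj : Disjoint S.powerset (S.powerset.image (insert i)) := by
      rw [Finset.disjoint_left]
      intro T hT hT'
      obtain ⟨T', _, rfl⟩ := Finset.mem_image.mp hT'
      exact hi (Finset.mem_powerset.mp hT (Finset.mem_insert_self i T'))
    have hinj : ∀ T ∈ S.powerset, ∀ T' ∈ S.powerset,
        insert i T = insert i T' → T = T' := by
      intro T hT T' hT' he
      have h1 : i ∉ T := fun h => hi (Finset.mem_powerset.mp hT h)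
      have h2 : i ∉ T' := fun h => hi (Finset.mem_powerset.mp hT' h)
      rw [← Finset.erase_insert h1, ← Finset.erase_insert h2, he]
    rw [Finset.powerset_insert, Finset.sum_union hdisj, Finset.sum_image hinj,
      ← Finset.sum_add_distrib]
    refine Finset.sum_congr rfl fun T hT => ?_
    have hiT : i ∉ T := fun h => hi (Finset.mem_powerset.mp hT h)
    rw [opProd_insert hiT]
    simp only [Function.comp_apply, DeltaOp]
    ring

lemma count_supersets (ρ : ℕ) (T : Finset (Fin n)) (hT : T.card ≤ ρ) :
    ((Finset.powersetCard ρ (Finset.univ : Finset (Fin n))).filter (fun S => T ⊆ S)).card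
      = (n - T.card).choose (ρ - T.card) := by
  classical
  have hcard : (Finset.univ \ T : Finset (Fin n)).card = n - T.card := by
    rw [Finset.card_sdiff_of_subset (Finset.subset_univ T), Finset.card_univ, Fintype.card_fin]
  rw [← hcard, ← Finset.card_powersetCard]
  refine Finset.card_bij (fun S _ => S \ T) ?_ ?_ ?_
  · intro S hS
    rw [Finset.mem_filter, Finset.mem_powersetCard] at hS
    obtain ⟨⟨_, hScard⟩, hTS⟩ := hS
    rw [Finset.mem_powersetCard]
    exact ⟨Finset.sdiff_subset_sdiff (Finset.subset_univ S) le_rfl,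
      by rw [Finset.card_sdiff_of_subset hTS, hScard]⟩
  · intro S hS S' hS' he
    rw [Finset.mem_filter] at hS hS'
    rw [← Finset.sdiff_union_of_subset hS.2, ← Finset.sdiff_union_of_subset hS'.2, he]
  · intro U hU
    rw [Finset.mem_powersetCard] at hU
    obtain ⟨hUsub, hUcard⟩ := hU
    have hdisj : Disjoint U T := by
      refine Finset.disjoint_left.mpr fun a ha ha' => ?_
      exact (Finset.mem_sdiff.mp (hUsub ha)).2 ha'
    refine ⟨U ∪ T, ?_, ?_⟩
    · rw [Finset.mem_filter, Finset.mem_powersetCard]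
      refine ⟨⟨Finset.subset_univ _, ?_⟩, Finset.subset_union_right⟩
      rw [Finset.card_union_of_disjoint hdisj, hUcard]
      omega
    · rw [Finset.union_sdiff_distrib, Finset.sdiff_self, Finset.union_empty,
        Finset.sdiff_eq_self_of_disjoint hdisj]

lemma count_supersets_of_gt (ρ : ℕ) (T : Finset (Fin n)) (hT : ρ < T.card) :
    ((Finset.powersetCard ρ (Finset.univ : Finset (Fin n))).filter (fun S => T ⊆ S)).card = 0 := by
  rw [Finset.card_eq_zero, Finset.filter_eq_empty_iff]
  intro S hS
  rw [Finset.mem_powersetCard] at hS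
  intro hTS
  have := Finset.card_le_card hTS
  omega

lemma key_sum (A : (Fin n → ℤ) → ℚ)
    (h : ∀ ρ : ℕ, 1 ≤ ρ → ρ ≤ n → esymmOp n ρ (DeltaOp n) A = 0)
    (ρ : ℕ) (hρ1 : 1 ≤ ρ) (hρn : ρ ≤ n) (k : Fin n → ℤ) :
    ∑ S ∈ Finset.powersetCard ρ (Finset.univ : Finset (Fin n)),
        A (fun j => k j + if j ∈ S then 1 else 0)
      = (n.choose ρ : ℚ) * A k := by
  classical
  set g : Finset (Fin n) → ℚ := fun T => opProd n (DeltaOp n) T A k with hg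
  have step1 : ∑ S ∈ Finset.powersetCard ρ (Finset.univ : Finset (Fin n)),
      A (fun j => k j + if j ∈ S then 1 else 0)
      = ∑ S ∈ Finset.powersetCard ρ (Finset.univ : Finset (Fin n)),
          ∑ T ∈ (Finset.univ : Finset (Fin n)).powerset, if T ⊆ S then g T else 0 := by
    refine Finset.sum_congr rfl fun S _ => ?_
    rw [indicator_expand A S k]
    have hps : S.powerset
        = (Finset.univ : Finset (Fin n)).powerset.filter (fun T => T ⊆ S) := by
      ext T
      simp [Finset.mem_powerset, Finset.subset_univ]
    rw [hps, Finset.sum_filter]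
  rw [step1, Finset.sum_comm]
  have step2 : ∀ T : Finset (Fin n),
      ∑ S ∈ Finset.powersetCard ρ (Finset.univ : Finset (Fin n)),
          (if T ⊆ S then g T else 0)
      = (((Finset.powersetCard ρ (Finset.univ : Finset (Fin n))).filter
            (fun S => T ⊆ S)).card : ℚ) * g T := by
    intro T
    rw [← Finset.sum_filter, Finset.sum_const, nsmul_eq_mul]
  have step3 : ∑ T ∈ (Finset.univ : Finset (Fin n)).powerset,
      ∑ S ∈ Finset.powersetCard ρ (Finset.univ : Finset (Fin n)),
          (if T ⊆ S then g T else 0)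
      = ∑ j ∈ Finset.range (n + 1), ∑ T ∈ Finset.powersetCard j (Finset.univ : Finset (Fin n)),
          (((Finset.powersetCard ρ (Finset.univ : Finset (Fin n))).filter
            (fun S => T ⊆ S)).card : ℚ) * g T := by
    rw [Finset.powerset_card_disjiUnion]; refine (Finset.sum_disjiUnion _ _ _).trans ?_
    rw [Finset.card_univ, Fintype.card_fin]
    exact Finset.sum_congr rfl fun j _ => Finset.sum_congr rfl fun T _ => step2 T
  rw [step3]
  rw [Finset.sum_eq_single_of_mem 0 (Finset.mem_range.mpr (Nat.succ_pos n))]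
  · rw [Finset.powersetCard_zero, Finset.sum_singleton]
    have hc : ((Finset.powersetCard ρ (Finset.univ : Finset (Fin n))).filter
        (fun S => (∅ : Finset (Fin n)) ⊆ S)).card = n.choose ρ := by
      rw [count_supersets ρ ∅ (by simp), Finset.card_empty]
      simp
    rw [hc]
    have : g ∅ = A k := by
      rw [hg]
      simp [opProd_empty]
    rw [this]
  · intro j hj hj0
    rw [Finset.mem_range] at hj
    have hj1 : 1 ≤ j := Nat.one_le_iff_ne_zero.mpr hj0
    have hjn : j ≤ n := Nat.lt_succ_iff.mp hj
    by_cases hcase : j ≤ ρ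
    · have hconst : ∀ T ∈ Finset.powersetCard j (Finset.univ : Finset (Fin n)),
          (((Finset.powersetCard ρ (Finset.univ : Finset (Fin n))).filter
            (fun S => T ⊆ S)).card : ℚ) * g T
          = ((n - j).choose (ρ - j) : ℚ) * g T := by
        intro T hT
        rw [Finset.mem_powersetCard] at hT
        rw [count_supersets ρ T (hT.2 ▸ hcase), hT.2]
      rw [Finset.sum_congr rfl hconst, ← Finset.mul_sum]
      have h0 : ∑ T ∈ Finset.powersetCard j (Finset.univ : Finset (Fin n)), g T = 0 := by
        have := h j hj1 hjn
        have := congrFun this k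
        simpa [esymmOp, hg] using this
      rw [h0, mul_zero]
    · push_neg at hcase
      have hzero : ∀ T ∈ Finset.powersetCard j (Finset.univ : Finset (Fin n)),
          (((Finset.powersetCard ρ (Finset.univ : Finset (Fin n))).filter
            (fun S => T ⊆ S)).card : ℚ) * g T = 0 := by
        intro T hT
        rw [Finset.mem_powersetCard] at hT
        rw [count_supersets_of_gt ρ T (hT.2 ▸ hcase)]
        simp
      rw [Finset.sum_congr rfl hzero, Finset.sum_const, smul_zero]

lemma eval_one_esymm (ρ : ℕ) :
    MvPolynomial.eval (fun _ => (1 : ℚ)) (MvPolynomial.esymm (Fin n) ℚ ρ) = n.choose ρ := by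
  rw [MvPolynomial.esymm]
  rw [map_sum]
  have : ∀ S ∈ Finset.powersetCard ρ (Finset.univ : Finset (Fin n)),
      MvPolynomial.eval (fun _ => (1 : ℚ)) (∏ i ∈ S, MvPolynomial.X i) = 1 := by
    intro S _
    rw [map_prod]
    simp
  rw [Finset.sum_congr rfl this, Finset.sum_const, Finset.card_powersetCard,
    Finset.card_univ, Fintype.card_fin, nsmul_eq_mul, mul_one]

end Aux

/-- If `e_ρ(Δ_1, …, Δ_n) A = 0` for all `1 ≤ ρ ≤ n`, then every symmetric polynomial
`p` satisfies `p(E_1, …, E_n) A = p(1, …, 1) · A`. -/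
theorem symm_poly_shift_eval (n : ℕ) (hn : 1 ≤ n) (A : (Fin n → ℤ) → ℚ)
    (h : ∀ ρ : ℕ, 1 ≤ ρ → ρ ≤ n → esymmOp n ρ (DeltaOp n) A = 0)
    (p : MvPolynomial (Fin n) ℚ) (hp : p.IsSymmetric) :
    applyShifts p A = fun k => MvPolynomial.eval (fun _ => (1 : ℚ)) p * A k := by
  classical
  obtain ⟨q, hq⟩ := MvPolynomial.esymmAlgHom_surjective (σ := Fin n) (R := ℚ) (n := n)
    (by simp) ⟨p, (MvPolynomial.mem_symmetricSubalgebra p).mpr hp⟩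
  have hpq : p = MvPolynomial.aeval
      (fun i : Fin n => MvPolynomial.esymm (Fin n) ℚ (i + 1)) q := by
    rw [← MvPolynomial.esymmAlgHom_apply, hq]
  rw [hpq]
  clear hpq hq hp p
  induction q using MvPolynomial.induction_on with
  | C a =>
    rw [MvPolynomial.aeval_C]
    have : (algebraMap ℚ (MvPolynomial (Fin n) ℚ)) a = MvPolynomial.C a := rfl
    rw [this, applyShifts_C]
    simp
  | add p q hp hq =>
    rw [map_add, applyShifts_add, hp, hq, map_add]
    funext k
    simp only [Pi.add_apply]
    ring
  | mul_X q i hq =>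
    rw [map_mul, MvPolynomial.aeval_X, applyShifts_mul]
    have hesymm : applyShifts (MvPolynomial.esymm (Fin n) ℚ (i + 1)) A
        = fun k => (n.choose (i + 1 : ℕ) : ℚ) * A k := by
      funext k
      rw [applyShifts_esymm]
      exact key_sum A h (i + 1) (Nat.le_add_left 1 i) i.2 k
    rw [hesymm, applyShifts_const_mul, hq, map_mul, eval_one_esymm]
    funext k
    ring
end

section
/- Let n ≥ 2. As operators on functions ℤ^n → ℚ, ∏_{i=2}^{n} (id + δ_1 Δ_i) − ∏_{i=2}^{n} (id + Δ_1 δ_i) = ∑_{s=1}^{n} ∑_{r=1}^{n−s} (−1)^s · ( Δ_1^{r+s−1} δ_1^{s−1} e_r(δ_1,...,δ_n) − δ_1^{r+s−1} Δ_1^{s−1} e_r(Δ_1,...,Δ_n) ), where e_r is the r-th elementary symmetric polynomial in n variables evaluated at the indicated commuting operators. -/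
namespace OpV
open Finset

set_option linter.unusedSectionVars false
variable {R : Type*} [CommRing R] {ι : Type*} [DecidableEq ι]

/-- elementary symmetric polynomial over a finset -/
def Er (x : ι → R) (s : Finset ι) (r : ℕ) : R :=
  ∑ S ∈ Finset.powersetCard r s, ∏ i ∈ S, x i

@[simp] lemma Er_zero (x : ι → R) (s : Finset ι) : Er x s 0 = 1 := by
  simp [Er, Finset.powersetCard_zero]

lemma Er_insert (x : ι → R) {a : ι} {s : Finset ι} (h : a ∉ s) (r : ℕ) :
    Er x (insert a s) (r + 1) = Er x s (r + 1) + x a * Er x s r := by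
  unfold Er
  rw [Finset.powersetCard_succ_insert h, Finset.sum_union, Finset.sum_image, Finset.mul_sum]
  · congr 1
    refine Finset.sum_congr rfl fun S hS => ?_
    rw [Finset.mem_powersetCard] at hS
    rw [Finset.prod_insert (fun ha => h (hS.1 ha))]
  · intro S hS T hT hST
    rw [Finset.mem_coe, Finset.mem_powersetCard] at hS hT
    have hA : a ∉ S := fun ha => h (hS.1 ha)
    have hB : a ∉ T := fun ha => h (hT.1 ha)
    rw [← Finset.erase_insert hA, ← Finset.erase_insert hB, hST]
  · rw [Finset.disjoint_left]
    intro S hS hS'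
    rw [Finset.mem_powersetCard] at hS
    rcases Finset.mem_image.mp hS' with ⟨T, hT, rfl⟩
    exact h (hS.1 (Finset.mem_insert_self a T))

lemma prod_one_add (x : ι → R) (s : Finset ι) (c : R) :
    ∏ i ∈ s, (1 + c * x i) = ∑ r ∈ Finset.range (s.card + 1), c ^ r * Er x s r := by
  have : ∏ i ∈ s, (1 + c * x i) = ∏ i ∈ s, (c * x i + 1) := by
    refine Finset.prod_congr rfl fun i _ => add_comm _ _
  rw [this, Finset.prod_add]
  rw [Finset.powerset_card_disjiUnion]
  refine (Finset.sum_disjiUnion _ _ _).trans ?_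
  refine Finset.sum_congr rfl fun r _ => ?_
  rw [Er, Finset.mul_sum]
  refine Finset.sum_congr rfl fun S hS => ?_
  rw [Finset.mem_powersetCard] at hS
  rw [Finset.prod_const_one, mul_one, Finset.prod_mul_distrib, Finset.prod_const, hS.2]

end OpV

namespace OpV
open Finset

variable {R : Type*} [CommRing R] {n : ℕ}

lemma sum_Icc_one (f : ℕ → R) (m : ℕ) : ∑ i ∈ Icc 1 m, f i = ∑ i ∈ range m, f (1+i) := by
  rw [← Finset.Ico_add_one_right_eq_Icc, Finset.sum_Ico_eq_sum_range, Nat.add_sub_cancel]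

lemma geom_step (c : R) (m : ℕ) :
    ∑ j ∈ Finset.range (m+1), (-c) ^ j = 1 - c * ∑ j ∈ Finset.range m, (-c) ^ j := by
  rw [Finset.sum_range_succ']
  have : ∀ j : ℕ, (-c) ^ (j+1) = -c * (-c) ^ j := fun j => by rw [pow_succ]; ring
  rw [Finset.sum_congr rfl fun j _ => this j, ← Finset.mul_sum]
  ring

lemma W_eval (hn : 0 < n) (a : Fin n → R) (β : R) :
    (∏ i ∈ Finset.univ.filter (fun i : Fin n => i.1 ≠ 0), (1 + β * a i)) +
      ∑ s ∈ Finset.Icc 1 n, ∑ r ∈ Finset.Icc 1 (n - s),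
        (-1 : R) ^ s * (β ^ (r + s - 1) * (a ⟨0, hn⟩ ^ (s - 1) * Er a Finset.univ r)) =
    1 - ∑ j ∈ Finset.range (n - 1), a ⟨0, hn⟩ * β * (-(a ⟨0, hn⟩ * β)) ^ j := by
  classical
  set z : Fin n := ⟨0, hn⟩ with hzdef
  set T : Finset (Fin n) := Finset.univ.filter (fun i : Fin n => i.1 ≠ 0) with hT
  set α : R := a z with hα
  have hzT : z ∉ T := by simp [hT, hzdef]
  have hins : insert z T = Finset.univ := by
    apply Finset.eq_univ_iff_forall.mpr
    intro i
    rcases eq_or_ne i z with h | h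
    · exact Finset.mem_insert.mpr (Or.inl h)
    · refine Finset.mem_insert.mpr (Or.inr ?_)
      rw [hT, Finset.mem_filter]
      exact ⟨Finset.mem_univ _, fun h0 => h (Fin.ext h0)⟩
  have hcard : T.card = n - 1 := by
    have h1 : (insert z T).card = T.card + 1 := Finset.card_insert_of_notMem hzT
    rw [hins, Finset.card_univ, Fintype.card_fin] at h1
    omega
  -- Step A : expand product
  have prodA : ∏ i ∈ T, (1 + β * a i) = ∑ r ∈ Finset.range n, β ^ r * Er a T r := by
    rw [prod_one_add, hcard, Nat.sub_add_cancel hn]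
  -- Step B : swap sums
  have hswap : (∑ s ∈ Finset.Icc 1 n, ∑ r ∈ Finset.Icc 1 (n - s),
      (-1:R) ^ s * (β ^ (r + s - 1) * (α ^ (s - 1) * Er a Finset.univ r))) =
      ∑ r ∈ Finset.Icc 1 (n-1), ∑ s ∈ Finset.Icc 1 (n - r),
      (-1:R) ^ s * (β ^ (r + s - 1) * (α ^ (s - 1) * Er a Finset.univ r)) :=
    Finset.sum_comm' (by intro s r; simp only [Finset.mem_Icc]; omega)
  rw [prodA, hswap]
  -- Step C : inner geometric sums
  have hinner : ∀ r ∈ Finset.Icc 1 (n-1),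
      (∑ s ∈ Finset.Icc 1 (n - r),
        (-1:R) ^ s * (β ^ (r + s - 1) * (α ^ (s - 1) * Er a Finset.univ r)))
      = -(β ^ r * (Er a Finset.univ r * ∑ j ∈ Finset.range (n - r), (-(α*β)) ^ j)) := by
    intro r hr
    rw [sum_Icc_one, Finset.mul_sum, Finset.mul_sum, ← Finset.sum_neg_distrib]
    refine Finset.sum_congr rfl fun j hj => ?_
    have h2 : r + (1 + j) - 1 = r + j := by omega
    have h3 : 1 + j - 1 = j := by omega
    rw [h2, h3]
    ring
  rw [Finset.sum_congr rfl hinner]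
  -- Step D : split off r = 0 of the range-n sum, telescope
  have hsplit : (∑ r ∈ Finset.range n, β ^ r * Er a T r)
      = (∑ i ∈ Finset.range (n-1), β ^ (i+1) * Er a T (i+1)) + 1 := by
    have h4 : n = (n-1) + 1 := by omega
    nth_rewrite 1 [h4]
    rw [Finset.sum_range_succ']
    simp
  have hsplit2 : (∑ r ∈ Finset.Icc 1 (n-1),
      -(β ^ r * (Er a Finset.univ r * ∑ j ∈ Finset.range (n - r), (-(α*β)) ^ j)))
      = ∑ i ∈ Finset.range (n-1),
        -(β ^ (1+i) * (Er a Finset.univ (1+i) * ∑ j ∈ Finset.range (n - (1+i)), (-(α*β)) ^ j)) :=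
    sum_Icc_one _ _
  rw [hsplit, hsplit2, add_right_comm, ← Finset.sum_add_distrib]
  set g : ℕ → R := fun i =>
    α * (∑ j ∈ Finset.range (n-1-i), (-(α*β)) ^ j) * (β ^ (i+1) * Er a T i) with hg
  have htel : ∀ i ∈ Finset.range (n-1),
      β ^ (i+1) * Er a T (i+1) +
        -(β ^ (1+i) * (Er a Finset.univ (1+i) * ∑ j ∈ Finset.range (n - (1+i)), (-(α*β)) ^ j))
      = g (i+1) - g i := by
    intro i hi
    rw [Finset.mem_range] at hi
    have hE : Er a Finset.univ (1+i) = Er a T (1+i) + α * Er a T i := by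
      rw [← hins, add_comm 1 i, Er_insert a hzT, ← hα, add_comm i 1]
    have h5 : n - (1+i) = (n - i - 2) + 1 := by omega
    have h6 : n - 1 - (i+1) = n - i - 2 := by omega
    have h7 : n - 1 - i = (n - i - 2) + 1 := by omega
    rw [hE, h5, geom_step, hg]
    simp only []
    rw [h6, h7, geom_step]
    have h9 : 1 + i = i + 1 := add_comm 1 i
    rw [h9]
    ring
  rw [Finset.sum_congr rfl htel, Finset.sum_range_sub g (n-1), hg]
  simp only []
  have h8 : n - 1 - (n-1) = 0 := by omega
  rw [h8, Nat.sub_zero]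
  simp only [Finset.range_zero, Finset.sum_empty, Er_zero, mul_zero, zero_mul, pow_one, mul_one]
  rw [← Finset.mul_sum]
  ring



lemma key (hn : 0 < n) (a b : Fin n → R) :
    (∏ i ∈ Finset.univ.filter (fun i : Fin n => i.1 ≠ 0), (1 + b ⟨0, hn⟩ * a i)) -
      (∏ i ∈ Finset.univ.filter (fun i : Fin n => i.1 ≠ 0), (1 + a ⟨0, hn⟩ * b i)) =
    ∑ s ∈ Finset.Icc 1 n, ∑ r ∈ Finset.Icc 1 (n - s),
      (-1 : R) ^ s *
        (a ⟨0, hn⟩ ^ (r + s - 1) * (b ⟨0, hn⟩ ^ (s - 1) * Er b Finset.univ r) -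
         b ⟨0, hn⟩ ^ (r + s - 1) * (a ⟨0, hn⟩ ^ (s - 1) * Er a Finset.univ r)) := by
  have h1 := W_eval hn a (b ⟨0, hn⟩)
  have h2 := W_eval hn b (a ⟨0, hn⟩)
  rw [mul_comm (b ⟨0, hn⟩) (a ⟨0, hn⟩)] at h2
  have hsp : ∀ s ∈ Finset.Icc 1 n,
      (∑ r ∈ Finset.Icc 1 (n-s), (-1 : R) ^ s *
        (a ⟨0, hn⟩ ^ (r + s - 1) * (b ⟨0, hn⟩ ^ (s - 1) * Er b Finset.univ r) -
         b ⟨0, hn⟩ ^ (r + s - 1) * (a ⟨0, hn⟩ ^ (s - 1) * Er a Finset.univ r)))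
      = (∑ r ∈ Finset.Icc 1 (n-s),
          (-1:R)^s * (a ⟨0, hn⟩ ^ (r + s - 1) * (b ⟨0, hn⟩ ^ (s - 1) * Er b Finset.univ r)))
        - ∑ r ∈ Finset.Icc 1 (n-s),
          (-1:R)^s * (b ⟨0, hn⟩ ^ (r + s - 1) * (a ⟨0, hn⟩ ^ (s - 1) * Er a Finset.univ r)) := by
    intro s _
    rw [← Finset.sum_sub_distrib]
    exact Finset.sum_congr rfl fun r _ => by ring
  rw [Finset.sum_congr rfl hsp, Finset.sum_sub_distrib]
  linear_combination h1 - h2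

end OpV

namespace OpV

variable {n : ℕ}

/-- The action of the group algebra `ℚ[ℤ^n]` on functions `ℤ^n → ℚ` by shifts. -/
noncomputable def act (p : AddMonoidAlgebra ℚ (Fin n → ℤ)) (A : (Fin n → ℤ) → ℚ) :
    (Fin n → ℤ) → ℚ :=
  fun k => Finsupp.sum p.coeff fun v c => c * A (k + v)

lemma act_single (v : Fin n → ℤ) (c : ℚ) (A : (Fin n → ℤ) → ℚ) (k : Fin n → ℤ) :
    act (AddMonoidAlgebra.single v c) A k = c * A (k + v) := by
  unfold act
  rw [AddMonoidAlgebra.coeff_single, Finsupp.sum_single_index]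
  simp

lemma act_zero (A : (Fin n → ℤ) → ℚ) (k : Fin n → ℤ) :
    act (0 : AddMonoidAlgebra ℚ (Fin n → ℤ)) A k = 0 := by
  simp [act]

lemma act_add (p q : AddMonoidAlgebra ℚ (Fin n → ℤ)) (A : (Fin n → ℤ) → ℚ) (k : Fin n → ℤ) :
    act (p + q) A k = act p A k + act q A k :=
  Finsupp.sum_add_index' (fun _ => zero_mul _) (fun _ b₁ b₂ => add_mul b₁ b₂ _)

lemma act_neg (p : AddMonoidAlgebra ℚ (Fin n → ℤ)) (A : (Fin n → ℤ) → ℚ) (k : Fin n → ℤ) :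
    act (-p) A k = - act p A k := by
  have h := act_add p (-p) A k
  rw [add_neg_cancel, act_zero] at h
  linarith

lemma act_sub (p q : AddMonoidAlgebra ℚ (Fin n → ℤ)) (A : (Fin n → ℤ) → ℚ) (k : Fin n → ℤ) :
    act (p - q) A k = act p A k - act q A k := by
  rw [sub_eq_add_neg, act_add, act_neg, sub_eq_add_neg]

lemma act_sum {ι : Type*} (s : Finset ι) (f : ι → AddMonoidAlgebra ℚ (Fin n → ℤ))
    (A : (Fin n → ℤ) → ℚ) (k : Fin n → ℤ) :
    act (∑ i ∈ s, f i) A k = ∑ i ∈ s, act (f i) A k := by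
  classical
  induction s using Finset.cons_induction with
  | empty => simp [act_zero]
  | cons i s hi ih => rw [Finset.sum_cons, act_add, ih, Finset.sum_cons]

lemma act_one (A : (Fin n → ℤ) → ℚ) (k : Fin n → ℤ) :
    act (1 : AddMonoidAlgebra ℚ (Fin n → ℤ)) A k = A k := by
  rw [AddMonoidAlgebra.one_def, act_single, one_mul, add_zero]

lemma act_add' (p q : AddMonoidAlgebra ℚ (Fin n → ℤ)) (A : (Fin n → ℤ) → ℚ) :
    act (p + q) A = act p A + act q A :=
  funext fun k => act_add p q A k

lemma act_mul (p q : AddMonoidAlgebra ℚ (Fin n → ℤ)) (A : (Fin n → ℤ) → ℚ) :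
    act (p * q) A = act p (act q A) := by
  induction p using AddMonoidAlgebra.induction_linear with
  | zero =>
    funext k
    rw [zero_mul]
    simp [act_zero, act]
  | add p₁ p₂ h₁ h₂ =>
    funext k
    rw [add_mul, act_add, congrFun h₁ k, congrFun h₂ k, act_add]
  | single v c =>
    induction q using AddMonoidAlgebra.induction_linear with
    | zero =>
      funext k
      rw [mul_zero]
      have : act (0 : AddMonoidAlgebra ℚ (Fin n → ℤ)) A = fun _ => 0 :=
        funext fun k' => act_zero A k'
      rw [act_zero, this, act_single]
      simp
    | add q₁ q₂ h₁ h₂ =>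
      funext k
      rw [mul_add, act_add, congrFun h₁ k, congrFun h₂ k, act_add' q₁ q₂ A, act_single,
        act_single, act_single, Pi.add_apply, mul_add]
    | single w d =>
      rw [AddMonoidAlgebra.single_mul_single]
      funext k
      rw [act_single, act_single, act_single, ← add_assoc]
      ring

end OpV

namespace OpV

variable {n : ℕ}

/-- group algebra element for `Δ_i` -/
noncomputable def De (i : Fin n) : AddMonoidAlgebra ℚ (Fin n → ℤ) :=
  AddMonoidAlgebra.single (Pi.single i 1) 1 - 1

/-- group algebra element for `δ_i` -/
noncomputable def de (i : Fin n) : AddMonoidAlgebra ℚ (Fin n → ℤ) :=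
  1 - AddMonoidAlgebra.single (Pi.single i (-1)) 1

lemma kup_eq (k : Fin n → ℤ) (i : Fin n) (t : ℤ) : kup k i t = k + Pi.single i t := by
  funext j
  by_cases h : j = i
  · subst h; simp [kup]
  · simp [kup, h, Pi.single_apply]

lemma act_De (i : Fin n) (A : (Fin n → ℤ) → ℚ) : act (De i) A = DeltaOp n i A := by
  funext k
  rw [De, act_sub, act_single, act_one, one_mul, DeltaOp, kup_eq]

lemma act_de (i : Fin n) (A : (Fin n → ℤ) → ℚ) : act (de i) A = deltaOp n i A := by
  funext k
  rw [de, act_sub, act_single, act_one, one_mul, deltaOp, kup_eq]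

lemma act_iter (p : AddMonoidAlgebra ℚ (Fin n → ℤ))
    (F : ((Fin n → ℤ) → ℚ) → ((Fin n → ℤ) → ℚ)) (hF : ∀ B, F B = act p B) :
    ∀ (m : ℕ) (B : (Fin n → ℤ) → ℚ), F^[m] B = act (p ^ m) B := by
  intro m
  induction m with
  | zero =>
    intro B
    rw [pow_zero, Function.iterate_zero_apply]
    exact funext fun k => (act_one B k).symm
  | succ m ih =>
    intro B
    rw [Function.iterate_succ_apply, hF B, ih (act p B), ← act_mul, ← pow_succ]

lemma act_opProd (g : Fin n → AddMonoidAlgebra ℚ (Fin n → ℤ))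
    (F : Fin n → ((Fin n → ℤ) → ℚ) → ((Fin n → ℤ) → ℚ))
    (hF : ∀ i B, F i B = act (g i) B) (S : Finset (Fin n)) (A : (Fin n → ℤ) → ℚ) :
    opProd n F S A = act (∏ i ∈ S, g i) A := by
  rw [← Finset.prod_map_toList]
  unfold opProd
  induction S.toList with
  | nil =>
    simp only [List.foldr_nil, List.map_nil, List.prod_nil, id_eq]
    exact funext fun k => (act_one A k).symm
  | cons i l ih =>
    simp only [List.foldr_cons, List.map_cons, List.prod_cons, Function.comp_apply]
    rw [hF, ih, ← act_mul]

lemma act_esymm (g : Fin n → AddMonoidAlgebra ℚ (Fin n → ℤ))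
    (F : Fin n → ((Fin n → ℤ) → ℚ) → ((Fin n → ℤ) → ℚ))
    (hF : ∀ i B, F i B = act (g i) B) (r : ℕ) (A : (Fin n → ℤ) → ℚ) :
    esymmOp n r F A = act (Er g Finset.univ r) A := by
  funext k
  unfold esymmOp Er
  rw [act_sum]
  exact Finset.sum_congr rfl fun S _ => by rw [act_opProd g F hF S A]

lemma act_neg_one_pow (s : ℕ) :
    ∀ (p : AddMonoidAlgebra ℚ (Fin n → ℤ)) (A : (Fin n → ℤ) → ℚ) (k : Fin n → ℤ),
    act ((-1 : AddMonoidAlgebra ℚ (Fin n → ℤ)) ^ s * p) A k = (-1 : ℚ) ^ s * act p A k := by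
  induction s with
  | zero => intro p A k; rw [pow_zero, one_mul, pow_zero, one_mul]
  | succ s ih =>
    intro p A k
    have h1 : (-1 : AddMonoidAlgebra ℚ (Fin n → ℤ)) ^ (s+1) * p = (-1) ^ s * (-p) := by ring
    rw [h1, ih (-p), act_neg, pow_succ]
    ring

end OpV

open OpV

/-- The operator identity
`∏_{i=2}^{n} (id + δ_1 Δ_i) − ∏_{i=2}^{n} (id + Δ_1 δ_i)
  = ∑_{s=1}^{n} ∑_{r=1}^{n−s} (−1)^s (Δ_1^{r+s−1} δ_1^{s−1} e_r(δ_1,…,δ_n)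
      − δ_1^{r+s−1} Δ_1^{s−1} e_r(Δ_1,…,Δ_n))`
on functions `ℤ^n → ℚ`. -/
theorem operator_identity_V (n : ℕ) (hn : 2 ≤ n) :
    ∀ A : (Fin n → ℤ) → ℚ, ∀ k : Fin n → ℤ,
      opProd n (fun i A' k' => A' k' + deltaOp n ⟨0, by omega⟩ (DeltaOp n i A') k')
          (Finset.univ.filter (fun i : Fin n => i.1 ≠ 0)) A k -
        opProd n (fun i A' k' => A' k' + DeltaOp n ⟨0, by omega⟩ (deltaOp n i A') k')
          (Finset.univ.filter (fun i : Fin n => i.1 ≠ 0)) A k =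
      ∑ s ∈ Finset.Icc 1 n, ∑ r ∈ Finset.Icc 1 (n - s),
        (-1 : ℚ) ^ s *
          ((DeltaOp n ⟨0, by omega⟩)^[r + s - 1]
              ((deltaOp n ⟨0, by omega⟩)^[s - 1] (esymmOp n r (deltaOp n) A)) k -
            (deltaOp n ⟨0, by omega⟩)^[r + s - 1]
              ((DeltaOp n ⟨0, by omega⟩)^[s - 1] (esymmOp n r (DeltaOp n) A)) k) := by
  have hn0 : 0 < n := by omega
  intro A k
  show
    opProd n (fun i A' k' => A' k' + deltaOp n ⟨0, hn0⟩ (DeltaOp n i A') k')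
        (Finset.univ.filter (fun i : Fin n => i.1 ≠ 0)) A k -
      opProd n (fun i A' k' => A' k' + DeltaOp n ⟨0, hn0⟩ (deltaOp n i A') k')
        (Finset.univ.filter (fun i : Fin n => i.1 ≠ 0)) A k =
    ∑ s ∈ Finset.Icc 1 n, ∑ r ∈ Finset.Icc 1 (n - s),
      (-1 : ℚ) ^ s *
        ((DeltaOp n ⟨0, hn0⟩)^[r + s - 1]
            ((deltaOp n ⟨0, hn0⟩)^[s - 1] (esymmOp n r (deltaOp n) A)) k -
          (deltaOp n ⟨0, hn0⟩)^[r + s - 1]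
            ((DeltaOp n ⟨0, hn0⟩)^[s - 1] (esymmOp n r (DeltaOp n) A)) k)
  set z : Fin n := ⟨0, hn0⟩ with hz
  -- left-hand side
  have hF1 : ∀ (i : Fin n) (B : (Fin n → ℤ) → ℚ),
      (fun (A' : (Fin n → ℤ) → ℚ) k' => A' k' + deltaOp n z (DeltaOp n i A') k') B
        = act (1 + de z * De i) B := by
    intro i B
    funext k'
    show B k' + deltaOp n z (DeltaOp n i B) k' = act (1 + de z * De i) B k'
    rw [act_add, act_one, act_mul, act_De, act_de]
  have hF2 : ∀ (i : Fin n) (B : (Fin n → ℤ) → ℚ),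
      (fun (A' : (Fin n → ℤ) → ℚ) k' => A' k' + DeltaOp n z (deltaOp n i A') k') B
        = act (1 + De z * de i) B := by
    intro i B
    funext k'
    show B k' + DeltaOp n z (deltaOp n i B) k' = act (1 + De z * de i) B k'
    rw [act_add, act_one, act_mul, act_de, act_De]
  have hL1 := act_opProd (fun i => 1 + de z * De i) _ hF1
    (Finset.univ.filter (fun i : Fin n => i.1 ≠ 0)) A
  have hL2 := act_opProd (fun i => 1 + De z * de i) _ hF2
    (Finset.univ.filter (fun i : Fin n => i.1 ≠ 0)) A
  rw [congrFun hL1 k, congrFun hL2 k, ← act_sub]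
  -- right-hand side
  have hR : (∑ s ∈ Finset.Icc 1 n, ∑ r ∈ Finset.Icc 1 (n - s),
      (-1 : ℚ) ^ s *
        ((DeltaOp n z)^[r + s - 1] ((deltaOp n z)^[s - 1] (esymmOp n r (deltaOp n) A)) k -
          (deltaOp n z)^[r + s - 1] ((DeltaOp n z)^[s - 1] (esymmOp n r (DeltaOp n) A)) k))
      = ∑ s ∈ Finset.Icc 1 n, ∑ r ∈ Finset.Icc 1 (n - s),
        act ((-1 : AddMonoidAlgebra ℚ (Fin n → ℤ)) ^ s *
          (De z ^ (r + s - 1) * (de z ^ (s - 1) * Er de Finset.univ r) -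
            de z ^ (r + s - 1) * (De z ^ (s - 1) * Er De Finset.univ r))) A k := by
    refine Finset.sum_congr rfl fun s _ => Finset.sum_congr rfl fun r _ => ?_
    have e1 : esymmOp n r (deltaOp n) A = act (Er de Finset.univ r) A :=
      act_esymm de (deltaOp n) (fun i B => (act_de i B).symm) r A
    have e2 : esymmOp n r (DeltaOp n) A = act (Er De Finset.univ r) A :=
      act_esymm De (DeltaOp n) (fun i B => (act_De i B).symm) r A
    rw [e1, e2,
      act_iter (de z) (deltaOp n z) (fun B => (act_de z B).symm) (s-1),
      act_iter (De z) (DeltaOp n z) (fun B => (act_De z B).symm) (s-1),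
      ← act_mul, ← act_mul,
      act_iter (De z) (DeltaOp n z) (fun B => (act_De z B).symm) (r+s-1),
      act_iter (de z) (deltaOp n z) (fun B => (act_de z B).symm) (r+s-1),
      ← act_mul, ← act_mul, ← act_sub, ← act_neg_one_pow]
  rw [hR]
  have hR2 : ∀ s ∈ Finset.Icc 1 n,
      (∑ r ∈ Finset.Icc 1 (n - s),
        act ((-1 : AddMonoidAlgebra ℚ (Fin n → ℤ)) ^ s *
          (De z ^ (r + s - 1) * (de z ^ (s - 1) * Er de Finset.univ r) -
            de z ^ (r + s - 1) * (De z ^ (s - 1) * Er De Finset.univ r))) A k)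
      = act (∑ r ∈ Finset.Icc 1 (n - s),
          (-1 : AddMonoidAlgebra ℚ (Fin n → ℤ)) ^ s *
          (De z ^ (r + s - 1) * (de z ^ (s - 1) * Er de Finset.univ r) -
            de z ^ (r + s - 1) * (De z ^ (s - 1) * Er De Finset.univ r))) A k :=
    fun s _ => (act_sum _ _ A k).symm
  rw [Finset.sum_congr rfl hR2, ← act_sum]
  exact congrArg (fun p => act p A k) (key hn0 De de)
end

section
/- Let n ≥ 1 and k = (k_1,...,k_n) ∈ ℤ^n. Then det_{1 ≤ i, j ≤ n} ( binom(k_j + j − 1, i − 1) ) = ∏_{1 ≤ i < j ≤ n} (k_j − k_i + j − i)/(j − i), where for x ∈ ℚ and m ∈ ℕ, binom(x, m) = x(x−1)⋯(x−m+1)/m! denotes the generalized binomial coefficient (a polynomial in x of degree m). -/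
/-- The generalized binomial coefficient `binom(x, m) = x(x-1)⋯(x-m+1)/m!`. -/
def qchoose (x : ℚ) (m : ℕ) : ℚ :=
  (∏ t ∈ Finset.range m, (x - (t : ℚ))) / (m.factorial : ℚ)

lemma descPochhammer_eval_eq_prod (m : ℕ) (x : ℚ) :
    (descPochhammer ℚ m).eval x = ∏ t ∈ Finset.range m, (x - (t : ℚ)) := by
  induction m with
  | zero => simp
  | succ m ih => rw [descPochhammer_succ_eval, Finset.prod_range_succ, ih]

lemma prod_range_sub_eq_factorial (m : ℕ) :
    ∏ t ∈ Finset.range m, ((m : ℚ) - (t : ℚ)) = (m.factorial : ℚ) := by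
  have h : ∀ t ∈ Finset.range m, ((m : ℚ) - (t : ℚ)) = ((m - t : ℕ) : ℚ) := by
    intro t ht
    have := Finset.mem_range.mp ht
    push_cast [Nat.cast_sub this.le]
    ring
  rw [Finset.prod_congr rfl h, ← Nat.cast_prod]
  congr 1
  calc ∏ t ∈ Finset.range m, (m - t)
      = ∏ t ∈ Finset.range m, (t + 1) := by
        rw [← Finset.prod_range_reflect]
        refine Finset.prod_congr rfl fun j hj => ?_
        have := Finset.mem_range.mp hj
        omega
    _ = m.factorial := Finset.prod_range_add_one_eq_factorial m

lemma prod_Iio_fin (n : ℕ) (q : Fin n) (f : ℕ → ℚ) :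
    ∏ p ∈ Finset.Iio q, f p.1 = ∏ t ∈ Finset.range q.1, f t := by
  refine Finset.prod_nbij (fun p => p.1) ?_ ?_ ?_ ?_
  · intro p hp
    simpa [Finset.mem_range] using (Finset.mem_Iio.mp hp)
  · intro a _ b _ h
    exact Fin.ext h
  · intro t ht
    have ht' : t < q.1 := Finset.mem_range.mp ht
    exact ⟨⟨t, ht'.trans q.isLt⟩, Finset.mem_Iio.mpr (by simpa [Fin.lt_def] using ht'), rfl⟩
  · intro p _
    rfl

/-- `det_{1 ≤ i,j ≤ n} (binom(k_j + j - 1, i - 1))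
  = ∏_{1 ≤ i < j ≤ n} (k_j - k_i + j - i)/(j - i)`. -/
theorem binomial_determinant (n : ℕ) (hn : 1 ≤ n) (k : Fin n → ℤ) :
    Matrix.det (Matrix.of fun i j : Fin n => qchoose ((k j : ℚ) + (j.1 : ℚ)) i.1) =
      ∏ q : Fin n, ∏ p ∈ Finset.Iio q,
        (((k q : ℚ) - (k p : ℚ) + (q.1 : ℚ) - (p.1 : ℚ)) / ((q.1 : ℚ) - (p.1 : ℚ))) := by
  set x : Fin n → ℚ := fun j => (k j : ℚ) + (j.1 : ℚ) with hx
  -- LHS computation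
  have hM : (Matrix.of fun i j : Fin n => qchoose ((k j : ℚ) + (j.1 : ℚ)) i.1) =
      (Matrix.of fun i j : Fin n =>
        ((i.1.factorial : ℚ))⁻¹ *
          (Matrix.of fun a b : Fin n => (descPochhammer ℚ b.1).eval (x a)).transpose i j) := by
    ext i j
    simp [qchoose, descPochhammer_eval_eq_prod, Matrix.transpose, div_eq_inv_mul, x]
  have hvdm : (Matrix.of fun a b : Fin n => (descPochhammer ℚ b.1).eval (x a)).det
      = (Matrix.vandermonde x).det := by
    exact (Matrix.det_eval_matrixOfPolynomials_eq_det_vandermonde x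
      (fun i => descPochhammer ℚ i.1)
      (fun i => descPochhammer_natDegree ℚ i.1)
      (fun i => monic_descPochhammer ℚ i.1)).symm
  have hlhs : (Matrix.of fun i j : Fin n => qchoose ((k j : ℚ) + (j.1 : ℚ)) i.1).det =
      (∏ i : Fin n, ((i.1.factorial : ℚ))⁻¹) * (Matrix.vandermonde x).det := by
    rw [hM, Matrix.det_mul_column, Matrix.det_transpose, hvdm]
  -- RHS computation
  have hrhs : (∏ q : Fin n, ∏ p ∈ Finset.Iio q,
        (((k q : ℚ) - (k p : ℚ) + (q.1 : ℚ) - (p.1 : ℚ)) / ((q.1 : ℚ) - (p.1 : ℚ))))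
      = (∏ q : Fin n, ∏ p ∈ Finset.Iio q, (x q - x p)) *
        (∏ q : Fin n, ∏ p ∈ Finset.Iio q, ((q.1 : ℚ) - (p.1 : ℚ))⁻¹) := by
    rw [← Finset.prod_mul_distrib]
    refine Finset.prod_congr rfl fun q _ => ?_
    rw [← Finset.prod_mul_distrib]
    refine Finset.prod_congr rfl fun p _ => ?_
    rw [div_eq_mul_inv]
    congr 1
    simp only [x]
    ring
  have hfac : ∀ q : Fin n, ∏ p ∈ Finset.Iio q, ((q.1 : ℚ) - (p.1 : ℚ))
      = (q.1.factorial : ℚ) := by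
    intro q
    rw [prod_Iio_fin n q (fun t => (q.1 : ℚ) - (t : ℚ)), prod_range_sub_eq_factorial]
  have hswap : ∏ q : Fin n, ∏ p ∈ Finset.Iio q, (x q - x p)
      = ∏ p : Fin n, ∏ q ∈ Finset.Ioi p, (x q - x p) := by
    exact Finset.prod_comm' (by simp)
  have hvdet : (Matrix.vandermonde x).det = ∏ q : Fin n, ∏ p ∈ Finset.Iio q, (x q - x p) := by
    rw [Matrix.det_vandermonde, hswap]
  rw [hlhs, hrhs, hvdet]
  have : (∏ q : Fin n, ∏ p ∈ Finset.Iio q, ((q.1 : ℚ) - (p.1 : ℚ))⁻¹)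
      = ∏ q : Fin n, ((q.1.factorial : ℚ))⁻¹ := by
    refine Finset.prod_congr rfl fun q _ => ?_
    rw [Finset.prod_inv_distrib, hfac q]
  rw [this]
  ring
end
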